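/- arXiv:0801.0731 — 5 statements merged into one kernel-verified Lean document; each statement's English description precedes it below -/
import Mathlib

section
/- Let A be a Banach algebra, let π : A ⊗̂ A → A denote the bounded multiplication map, and let π* : A* → (A ⊗̂ A)* be its adjoint. Then the following are equivalent: (i) A is biflat; (ii) there is a net θ_δ : (A ⊗̂ A)* → A* of bounded A-bimodule morphisms which is uniformly bounded in operator norm and satisfies θ_δ ∘ π* → id_{A*} in the weak* operator topology; (iii) there is a uniformly bounded w*-approximate A-bimodule morphism θ_δ : (A ⊗̂ A)* → A* such that θ_δ ∘ π* → id_{A*} in the weak* operator topology. -/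
noncomputable section

open Filter Topology ComplexConjugate

universe u

/-- A realization of the (Banach-space) projective tensor product `E ⊗̂ F` of two complex
Banach spaces: a Banach space `X` with a contractive bilinear map `tmul` whose range spans a
dense subspace and which enjoys the universal property of the projective tensor product. -/
structure ProjTensor (E : Type u) (F : Type u) [NormedAddCommGroup E] [NormedSpace ℂ E]
    [NormedAddCommGroup F] [NormedSpace ℂ F] : Type (u + 1) where
  X : Type u
  [instNormed : NormedAddCommGroup X]
  [instSpace : NormedSpace ℂ X]
  [instComplete : CompleteSpace X]
  tmul : E →L[ℂ] F →L[ℂ] X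
  norm_tmul_le : ∀ (e : E) (f : F), ‖tmul e f‖ ≤ ‖e‖ * ‖f‖
  dense_span : Dense (↑(Submodule.span ℂ (Set.range fun p : E × F => tmul p.1 p.2)) : Set X)
  lift : ∀ (W : Type u) [NormedAddCommGroup W] [NormedSpace ℂ W] [CompleteSpace W]
      (b : E →L[ℂ] F →L[ℂ] W),
      ∃ L : X →L[ℂ] W, ‖L‖ ≤ ‖b‖ ∧ ∀ (e : E) (f : F), L (tmul e f) = b e f

attribute [instance] ProjTensor.instNormed ProjTensor.instSpace ProjTensor.instComplete

section BanachAlgebra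

variable (A : Type u) [NonUnitalNormedRing A] [NormedSpace ℂ A]
  [IsScalarTower ℂ A A] [SMulCommClass ℂ A A] [CompleteSpace A]

/-- Left multiplication `b ↦ a * b` as a continuous linear map. -/
def lmulOp (a : A) : A →L[ℂ] A := ContinuousLinearMap.mul ℂ A a

/-- Right multiplication `b ↦ b * a` as a continuous linear map. -/
def rmulOp (a : A) : A →L[ℂ] A := (ContinuousLinearMap.mul ℂ A).flip a

/-- A realization of the projective tensor square `A ⊗̂ A` of a Banach algebra `A`, together
with its canonical `A`-bimodule actions `a · (b ⊗ c) = (a*b) ⊗ c`, `(b ⊗ c) · a = b ⊗ (c*a)`,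
and the multiplication map `π : A ⊗̂ A → A`, `π (b ⊗ c) = b * c`. -/
structure TensorSquare extends ProjTensor A A where
  lsmul : A → (X →L[ℂ] X)
  rsmul : A → (X →L[ℂ] X)
  lsmul_tmul : ∀ a b c : A, lsmul a (tmul b c) = tmul (a * b) c
  rsmul_tmul : ∀ a b c : A, rsmul a (tmul b c) = tmul b (c * a)
  lsmul_norm_le : ∀ (a : A) (m : X), ‖lsmul a m‖ ≤ ‖a‖ * ‖m‖
  rsmul_norm_le : ∀ (a : A) (m : X), ‖rsmul a m‖ ≤ ‖a‖ * ‖m‖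
  mulMap : X →L[ℂ] A
  mulMap_tmul : ∀ a b : A, mulMap (tmul a b) = a * b

variable {A}

namespace TensorSquare

variable (ts : TensorSquare A)

/-- The adjoint `π* : A* → (A ⊗̂ A)*` of the multiplication map. -/
def piStar (φ : A →L[ℂ] ℂ) : ts.X →L[ℂ] ℂ := φ.comp ts.mulMap

/-- A bounded linear map `θ : (A ⊗̂ A)* → A*` is an `A`-bimodule morphism (for the canonical
dual bimodule actions `⟨a·ψ, m⟩ = ⟨ψ, m·a⟩`, `⟨ψ·a, m⟩ = ⟨ψ, a·m⟩` on `(A ⊗̂ A)*` and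
`⟨a·φ, b⟩ = ⟨φ, b*a⟩`, `⟨φ·a, b⟩ = ⟨φ, a*b⟩` on `A*`). -/
def IsBimoduleMorphism (θ : (ts.X →L[ℂ] ℂ) →L[ℂ] (A →L[ℂ] ℂ)) : Prop :=
  ∀ (a : A) (ψ : ts.X →L[ℂ] ℂ),
    θ (ψ.comp (ts.rsmul a)) = (θ ψ).comp (rmulOp A a) ∧
    θ (ψ.comp (ts.lsmul a)) = (θ ψ).comp (lmulOp A a)

/-- `A` is biflat: there is a bounded `A`-bimodule morphism `θ : (A ⊗̂ A)* → A*` with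
`θ ∘ π* = id`. -/
def Biflat : Prop :=
  ∃ θ : (ts.X →L[ℂ] ℂ) →L[ℂ] (A →L[ℂ] ℂ),
    ts.IsBimoduleMorphism θ ∧ ∀ φ : A →L[ℂ] ℂ, θ (ts.piStar φ) = φ

/-- `A` is approximately biflat: there is a net `θ_δ : (A ⊗̂ A)* → A*` of bounded
`A`-bimodule morphisms with `θ_δ ∘ π* → id_{A*}` in the weak* operator topology. -/
def ApproximatelyBiflat : Prop :=
  ∃ (ι : Type u) (ne : Nonempty ι) (sl : SemilatticeSup ι)
    (θ : ι → ((ts.X →L[ℂ] ℂ) →L[ℂ] (A →L[ℂ] ℂ))),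
    letI := ne
    letI := sl
    (∀ i, ts.IsBimoduleMorphism (θ i)) ∧
      ∀ (a : A) (φ : A →L[ℂ] ℂ),
        Tendsto (fun i => θ i (ts.piStar φ) a) atTop (𝓝 (φ a))

/-- `A` is pseudo-amenable: there is a net `(m_α)` in `A ⊗̂ A` with
`a · m_α - m_α · a → 0` and `π(m_α) a → a` in norm for every `a ∈ A`. -/
def PseudoAmenable : Prop :=
  ∃ (ι : Type u) (ne : Nonempty ι) (sl : SemilatticeSup ι) (m : ι → ts.X),
    letI := ne
    letI := sl
    (∀ a : A, Tendsto (fun i => ts.lsmul a (m i) - ts.rsmul a (m i)) atTop (𝓝 0)) ∧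
      ∀ a : A, Tendsto (fun i => ts.mulMap (m i) * a) atTop (𝓝 a)

/-- `A` is pseudo-contractible: there is a net `(m_α)` in `A ⊗̂ A` with
`a · m_α = m_α · a` for all `a, α`, and `π(m_α) a → a` in norm for every `a ∈ A`. -/
def PseudoContractible : Prop :=
  ∃ (ι : Type u) (ne : Nonempty ι) (sl : SemilatticeSup ι) (m : ι → ts.X),
    letI := ne
    letI := sl
    (∀ (i : ι) (a : A), ts.lsmul a (m i) = ts.rsmul a (m i)) ∧
      ∀ a : A, Tendsto (fun i => ts.mulMap (m i) * a) atTop (𝓝 a)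

end TensorSquare

end BanachAlgebra

/-- A Banach algebra has a (two-sided, not necessarily bounded) approximate identity. -/
def HasApproximateIdentity (B : Type u) [NonUnitalNormedRing B] : Prop :=
  ∃ (ι : Type u) (ne : Nonempty ι) (sl : SemilatticeSup ι) (e : ι → B),
    letI := ne
    letI := sl
    ∀ b : B, Tendsto (fun i => e i * b) atTop (𝓝 b) ∧ Tendsto (fun i => b * e i) atTop (𝓝 b)

/-- A Banach algebra has a central approximate identity. -/
def HasCentralApproximateIdentity (B : Type u) [NonUnitalNormedRing B] : Prop :=
  ∃ (ι : Type u) (ne : Nonempty ι) (sl : SemilatticeSup ι) (e : ι → B),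
    letI := ne
    letI := sl
    (∀ (i : ι) (b : B), e i * b = b * e i) ∧
      ∀ b : B, Tendsto (fun i => e i * b) atTop (𝓝 b) ∧ Tendsto (fun i => b * e i) atTop (𝓝 b)

/-- Auxiliary: a uniformly bounded w*-approximate bimodule morphism net with
`θ_δ ∘ π* → id` in W*OT yields biflatness, via an ultrafilter limit. -/
lemma biflat_of_approx (A : Type u) [NonUnitalNormedRing A] [NormedSpace ℂ A]
    [IsScalarTower ℂ A A] [SMulCommClass ℂ A A] [CompleteSpace A]
    (ts : TensorSquare A)
    (h : ∃ (ι : Type u) (ne : Nonempty ι) (sl : SemilatticeSup ι) (C : ℝ)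
          (θ : ι → ((ts.X →L[ℂ] ℂ) →L[ℂ] (A →L[ℂ] ℂ))),
          letI := ne
          letI := sl
          (∀ i, ‖θ i‖ ≤ C) ∧
            (∀ (a : A) (ψ : ts.X →L[ℂ] ℂ) (b : A),
              Tendsto (fun i => θ i (ψ.comp (ts.rsmul a)) b - (θ i ψ).comp (rmulOp A a) b)
                atTop (𝓝 0) ∧
              Tendsto (fun i => θ i (ψ.comp (ts.lsmul a)) b - (θ i ψ).comp (lmulOp A a) b)
                atTop (𝓝 0)) ∧
            ∀ (a : A) (φ : A →L[ℂ] ℂ),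
              Tendsto (fun i => θ i (ts.piStar φ) a) atTop (𝓝 (φ a))) :
    ts.Biflat := by
  obtain ⟨ι, ne, sl, C, θ, hC, hbim, hid⟩ := h
  letI := ne; letI := sl
  haveI : (atTop : Filter ι).NeBot := atTop_neBot
  set u : Ultrafilter ι := Ultrafilter.of atTop with hu_def
  have hu : (u : Filter ι) ≤ atTop := Ultrafilter.of_le _
  set C' : ℝ := max C 0 with hC'def
  have hbound : ∀ (ψ : ts.X →L[ℂ] ℂ) (b : A) (i : ι),
      ‖θ i ψ b‖ ≤ C' * ‖ψ‖ * ‖b‖ := by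
    intro ψ b i
    calc ‖θ i ψ b‖ ≤ ‖θ i ψ‖ * ‖b‖ := (θ i ψ).le_opNorm b
      _ ≤ ‖θ i‖ * ‖ψ‖ * ‖b‖ := by
          gcongr
          exact (θ i).le_opNorm ψ
      _ ≤ C' * ‖ψ‖ * ‖b‖ := by
          gcongr
          exact (hC i).trans (le_max_left _ _)
  have hex : ∀ (ψ : ts.X →L[ℂ] ℂ) (b : A),
      ∃ z : ℂ, Tendsto (fun i => θ i ψ b) (u : Filter ι) (𝓝 z) := by
    intro ψ b
    have hcomp : IsCompact (Metric.closedBall (0 : ℂ) (C' * ‖ψ‖ * ‖b‖)) :=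
      isCompact_closedBall _ _
    have hle : (u.map fun i => θ i ψ b : Filter ℂ) ≤
        𝓟 (Metric.closedBall (0 : ℂ) (C' * ‖ψ‖ * ‖b‖)) := by
      rw [Ultrafilter.coe_map, le_principal_iff, mem_map]
      filter_upwards with i
      simpa [Metric.mem_closedBall, dist_zero_right] using hbound ψ b i
    obtain ⟨z, _, hz⟩ := hcomp.ultrafilter_le_nhds (u.map fun i => θ i ψ b) hle
    exact ⟨z, by rwa [Ultrafilter.coe_map] at hz⟩
  set L : (ts.X →L[ℂ] ℂ) → A → ℂ := fun ψ b => (hex ψ b).choose with hLdef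
  have hL : ∀ (ψ : ts.X →L[ℂ] ℂ) (b : A),
      Tendsto (fun i => θ i ψ b) (u : Filter ι) (𝓝 (L ψ b)) := fun ψ b =>
    (hex ψ b).choose_spec
  have hLnorm : ∀ (ψ : ts.X →L[ℂ] ℂ) (b : A), ‖L ψ b‖ ≤ C' * ‖ψ‖ * ‖b‖ := by
    intro ψ b
    exact le_of_tendsto ((hL ψ b).norm) (Eventually.of_forall fun i => hbound ψ b i)
  -- inner continuous linear maps
  set g : (ts.X →L[ℂ] ℂ) → (A →L[ℂ] ℂ) := fun ψ =>
    LinearMap.mkContinuous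
      { toFun := L ψ
        map_add' := fun b b' => by
          refine tendsto_nhds_unique (hL ψ (b + b')) ?_
          simpa [map_add] using (hL ψ b).add (hL ψ b')
        map_smul' := fun c b => by
          refine tendsto_nhds_unique (hL ψ (c • b)) ?_
          simpa [map_smul] using (hL ψ b).const_smul c }
      (C' * ‖ψ‖) (fun b => hLnorm ψ b) with hgdef
  have hg : ∀ (ψ : ts.X →L[ℂ] ℂ) (b : A), g ψ b = L ψ b := fun _ _ => rfl
  set Θ : (ts.X →L[ℂ] ℂ) →L[ℂ] (A →L[ℂ] ℂ) :=
    LinearMap.mkContinuous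
      { toFun := g
        map_add' := fun ψ ψ' => by
          ext b
          show L (ψ + ψ') b = L ψ b + L ψ' b
          refine tendsto_nhds_unique (hL (ψ + ψ') b) ?_
          simpa [map_add] using (hL ψ b).add (hL ψ' b)
        map_smul' := fun c ψ => by
          ext b
          show L (c • ψ) b = c • L ψ b
          refine tendsto_nhds_unique (hL (c • ψ) b) ?_
          simpa [map_smul] using (hL ψ b).const_smul c }
      C' (fun ψ =>
        ContinuousLinearMap.opNorm_le_bound _
          (mul_nonneg (le_max_right C 0) (norm_nonneg ψ)) (fun b => hLnorm ψ b)) with hΘdef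
  have hΘ : ∀ (ψ : ts.X →L[ℂ] ℂ) (b : A), Θ ψ b = L ψ b := fun _ _ => rfl
  refine ⟨Θ, fun a ψ => ⟨?_, ?_⟩, fun φ => ?_⟩
  · ext b
    show L (ψ.comp (ts.rsmul a)) b = L ψ ((rmulOp A a) b)
    refine tendsto_nhds_unique (hL (ψ.comp (ts.rsmul a)) b) ?_
    have h1 := ((hbim a ψ b).1).mono_left hu
    have h2 := hL ψ ((rmulOp A a) b)
    have := h1.add h2
    simpa using this
  · ext b
    show L (ψ.comp (ts.lsmul a)) b = L ψ ((lmulOp A a) b)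
    refine tendsto_nhds_unique (hL (ψ.comp (ts.lsmul a)) b) ?_
    have h1 := ((hbim a ψ b).2).mono_left hu
    have h2 := hL ψ ((lmulOp A a) b)
    have := h1.add h2
    simpa using this
  · ext a
    show L (ts.piStar φ) a = φ a
    exact tendsto_nhds_unique (hL (ts.piStar φ) a) ((hid a φ).mono_left hu)

/-- Proposition 2.1: for a Banach algebra `A` (with a realization `ts` of its
projective tensor square `A ⊗̂ A`), the following are equivalent: (i) `A` is biflat;
(ii) there is a uniformly bounded net of bounded `A`-bimodule morphisms
`θ_δ : (A ⊗̂ A)* → A*` with `θ_δ ∘ π* → id_{A*}` in the weak* operator topology;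
(iii) there is a uniformly bounded w*-approximate `A`-bimodule morphism
`θ_δ : (A ⊗̂ A)* → A*` with `θ_δ ∘ π* → id_{A*}` in the weak* operator topology. -/
theorem biflat_tfae (A : Type u) [NonUnitalNormedRing A] [NormedSpace ℂ A]
    [IsScalarTower ℂ A A] [SMulCommClass ℂ A A] [CompleteSpace A]
    (ts : TensorSquare A) :
    List.TFAE
      [ts.Biflat,
        ∃ (ι : Type u) (ne : Nonempty ι) (sl : SemilatticeSup ι) (C : ℝ)
          (θ : ι → ((ts.X →L[ℂ] ℂ) →L[ℂ] (A →L[ℂ] ℂ))),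
          letI := ne
          letI := sl
          (∀ i, ‖θ i‖ ≤ C) ∧ (∀ i, ts.IsBimoduleMorphism (θ i)) ∧
            ∀ (a : A) (φ : A →L[ℂ] ℂ),
              Tendsto (fun i => θ i (ts.piStar φ) a) atTop (𝓝 (φ a)),
        ∃ (ι : Type u) (ne : Nonempty ι) (sl : SemilatticeSup ι) (C : ℝ)
          (θ : ι → ((ts.X →L[ℂ] ℂ) →L[ℂ] (A →L[ℂ] ℂ))),
          letI := ne
          letI := sl
          (∀ i, ‖θ i‖ ≤ C) ∧
            (∀ (a : A) (ψ : ts.X →L[ℂ] ℂ) (b : A),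
              Tendsto (fun i => θ i (ψ.comp (ts.rsmul a)) b - (θ i ψ).comp (rmulOp A a) b)
                atTop (𝓝 0) ∧
              Tendsto (fun i => θ i (ψ.comp (ts.lsmul a)) b - (θ i ψ).comp (lmulOp A a) b)
                atTop (𝓝 0)) ∧
            ∀ (a : A) (φ : A →L[ℂ] ℂ),
              Tendsto (fun i => θ i (ts.piStar φ) a) atTop (𝓝 (φ a))] := by
  tfae_have 1 → 2 := by
    rintro ⟨θ, hbim, hid⟩
    refine ⟨ULift ℕ, inferInstance, inferInstance, ‖θ‖, fun _ => θ, fun _ => le_rfl,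
      fun _ => hbim, fun a φ => ?_⟩
    simp only [hid]
    exact tendsto_const_nhds
  tfae_have 2 → 3 := by
    rintro ⟨ι, ne, sl, C, θ, hC, hbim, hid⟩
    refine ⟨ι, ne, sl, C, θ, hC, fun a ψ b => ⟨?_, ?_⟩, hid⟩
    · simp only [(hbim _ a ψ).1, sub_self]
      exact tendsto_const_nhds
    · simp only [(hbim _ a ψ).2, sub_self]
      exact tendsto_const_nhds
  tfae_have 3 → 1 := fun h => biflat_of_approx A ts h
  tfae_finish
end
end

section
/- Let A be a Banach algebra. Consider: (i) A is pseudo-amenable; (ii) there is an approximate A-bimodule morphism (β_δ) from A into A ⊗̂ A such that ‖π(β_δ(a)) − a‖ → 0 for every a ∈ A; (iii) there is a w*-approximate A-bimodule morphism θ_δ : (A ⊗̂ A)* → A* such that θ_δ ∘ π* → id_{A*} in the weak* operator topology. Then (i) implies (ii), (ii) implies (iii), and if A has a central approximate identity, then (iii) implies (i). -/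
noncomputable section

open Filter Topology ComplexConjugate

universe u

section Statement1

variable (A : Type u) [NonUnitalNormedRing A] [NormedSpace ℂ A]
  [IsScalarTower ℂ A A] [SMulCommClass ℂ A A] [CompleteSpace A]

/-- Condition (ii) of Theorem 2.4: there is an approximate `A`-bimodule morphism
`(β_δ)` from `A` into `A ⊗̂ A` with `‖π (β_δ a) - a‖ → 0` for every `a ∈ A`. -/
def ApproxBimoduleMorphismIntoTensor (ts : TensorSquare A) : Prop :=
  ∃ (ι : Type u) (ne : Nonempty ι) (sl : SemilatticeSup ι) (β : ι → (A →L[ℂ] ts.X)),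
    letI := ne
    letI := sl
    (∀ a x : A,
      Tendsto (fun i => β i (a * x) - ts.lsmul a (β i x)) atTop (𝓝 0) ∧
      Tendsto (fun i => β i (x * a) - ts.rsmul a (β i x)) atTop (𝓝 0)) ∧
    ∀ a : A, Tendsto (fun i => ts.mulMap (β i a)) atTop (𝓝 a)

/-- Condition (iii) of Theorem 2.4: a w*-approximate `A`-bimodule morphism
`θ_δ : (A ⊗̂ A)* → A*` with `θ_δ ∘ π* → id_{A*}` in the weak* operator topology. -/
def WstarApproxBimoduleMorphism (ts : TensorSquare A) : Prop :=
  ∃ (ι : Type u) (ne : Nonempty ι) (sl : SemilatticeSup ι)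
    (θ : ι → ((ts.X →L[ℂ] ℂ) →L[ℂ] (A →L[ℂ] ℂ))),
    letI := ne
    letI := sl
    (∀ (a : A) (ψ : ts.X →L[ℂ] ℂ) (b : A),
      Tendsto (fun i => θ i (ψ.comp (ts.rsmul a)) b - (θ i ψ).comp (rmulOp A a) b)
        atTop (𝓝 0) ∧
      Tendsto (fun i => θ i (ψ.comp (ts.lsmul a)) b - (θ i ψ).comp (lmulOp A a) b)
        atTop (𝓝 0)) ∧
    ∀ (a : A) (φ : A →L[ℂ] ℂ),
      Tendsto (fun i => θ i (ts.piStar φ) a) atTop (𝓝 (φ a))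

set_option linter.unusedSectionVars false

section Aux

variable {A}

namespace TensorSquare

variable (ts : TensorSquare A)

theorem clm_ext_tmul {W : Type*} [NormedAddCommGroup W] [NormedSpace ℂ W]
    {f g : ts.X →L[ℂ] W} (h : ∀ b c : A, f (ts.tmul b c) = g (ts.tmul b c)) : f = g := by
  have heq : Set.EqOn f g
      (↑(Submodule.span ℂ (Set.range fun p : A × A => ts.tmul p.1 p.2)) : Set ts.X) := by
    intro y hy
    induction hy using Submodule.span_induction with
    | mem x hx => obtain ⟨p, rfl⟩ := hx; exact h p.1 p.2
    | zero => simp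
    | add x y _ _ hx hy => simp [hx, hy]
    | smul a x _ hx => simp [hx]
  ext x
  exact congrFun (Continuous.ext_on ts.dense_span f.continuous g.continuous heq) x

theorem rsmul_rsmul (a x : A) :
    (ts.rsmul x).comp (ts.rsmul a) = ts.rsmul (a * x) := by
  apply ts.clm_ext_tmul
  intro b c
  simp [ts.rsmul_tmul, mul_assoc]

theorem lsmul_rsmul (a x : A) :
    (ts.lsmul a).comp (ts.rsmul x) = (ts.rsmul x).comp (ts.lsmul a) := by
  apply ts.clm_ext_tmul
  intro b c
  simp [ts.rsmul_tmul, ts.lsmul_tmul]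

theorem mulMap_rsmul (a : A) :
    ts.mulMap.comp (ts.rsmul a) = (rmulOp A a).comp ts.mulMap := by
  apply ts.clm_ext_tmul
  intro b c
  simp only [ContinuousLinearMap.comp_apply, ts.rsmul_tmul, ts.mulMap_tmul]
  show b * (c * a) = (ContinuousLinearMap.mul ℂ A).flip a (b * c)
  simp [mul_assoc]

theorem rsmul_add (a b : A) : ts.rsmul (a + b) = ts.rsmul a + ts.rsmul b := by
  apply ts.clm_ext_tmul
  intro x y
  simp [ts.rsmul_tmul, mul_add]

theorem rsmul_smulc (s : ℂ) (a : A) : ts.rsmul (s • a) = s • ts.rsmul a := by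
  apply ts.clm_ext_tmul
  intro x y
  simp [ts.rsmul_tmul, mul_smul_comm]

/-- `a ↦ m · a` as a continuous linear map `A →L[ℂ] A ⊗̂ A`. -/
def rsmulCLM (m : ts.X) : A →L[ℂ] ts.X :=
  LinearMap.mkContinuous
    { toFun := fun a => ts.rsmul a m
      map_add' := fun a b => by show ts.rsmul (a + b) m = _; rw [ts.rsmul_add]; simp
      map_smul' := fun s a => by show ts.rsmul (s • a) m = _; rw [ts.rsmul_smulc]; simp }
    ‖m‖ (fun a => by
      simpa [mul_comm] using ts.rsmul_norm_le a m)

@[simp] theorem rsmulCLM_apply (m : ts.X) (a : A) : ts.rsmulCLM m a = ts.rsmul a m := rfl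

end TensorSquare

theorem lmulOp_apply (a b : A) : lmulOp A a b = a * b := rfl

theorem rmulOp_apply (a b : A) : rmulOp A a b = b * a := rfl

end Aux

section Parts12

variable {A}

theorem part_one {ts : TensorSquare A} (h : ts.PseudoAmenable) :
    ApproxBimoduleMorphismIntoTensor A ts := by
  obtain ⟨ι, ne, sl, m, hdiag, hmul⟩ := h
  refine ⟨ι, ne, sl, fun i => ts.rsmulCLM (m i), fun a x => ⟨?_, ?_⟩, fun a => ?_⟩
  · have hkey : ∀ i, ts.rsmulCLM (m i) (a * x) - ts.lsmul a (ts.rsmulCLM (m i) x) =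
        -(ts.rsmul x (ts.lsmul a (m i) - ts.rsmul a (m i))) := by
      intro i
      have h1 : ts.rsmul (a * x) (m i) = ts.rsmul x (ts.rsmul a (m i)) := by
        rw [← ts.rsmul_rsmul a x]; rfl
      have h2 : ts.lsmul a (ts.rsmul x (m i)) = ts.rsmul x (ts.lsmul a (m i)) := by
        have := DFunLike.congr_fun (ts.lsmul_rsmul a x) (m i)
        simpa using this
      simp only [TensorSquare.rsmulCLM_apply, h1, h2, map_sub]
      abel
    simp only [hkey]
    have h0 : Filter.Tendsto (fun i => ts.rsmul x (ts.lsmul a (m i) - ts.rsmul a (m i)))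
        atTop (𝓝 (ts.rsmul x 0)) := ((ts.rsmul x).continuous.tendsto 0).comp (hdiag a)
    rw [map_zero] at h0
    simpa using h0.neg
  · have hkey : ∀ i, ts.rsmulCLM (m i) (x * a) - ts.rsmul a (ts.rsmulCLM (m i) x) = 0 := by
      intro i
      have h1 : ts.rsmul (x * a) (m i) = ts.rsmul a (ts.rsmul x (m i)) := by
        rw [← ts.rsmul_rsmul x a]; rfl
      simp [TensorSquare.rsmulCLM_apply, h1]
    simp only [hkey]
    exact tendsto_const_nhds
  · have hkey : ∀ i, ts.mulMap (ts.rsmulCLM (m i) a) = ts.mulMap (m i) * a := by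
      intro i
      have := DFunLike.congr_fun (ts.mulMap_rsmul a) (m i)
      simpa [rmulOp_apply] using this
    simp only [hkey]
    exact hmul a

theorem part_two {ts : TensorSquare A} (h : ApproxBimoduleMorphismIntoTensor A ts) :
    WstarApproxBimoduleMorphism A ts := by
  obtain ⟨ι, ne, sl, β, hbm, hπ⟩ := h
  refine ⟨ι, ne, sl, fun i => (ContinuousLinearMap.compL ℂ A ts.X ℂ).flip (β i),
    fun a ψ b => ⟨?_, ?_⟩, fun a φ => ?_⟩
  · have hkey : ∀ i,
        (ContinuousLinearMap.compL ℂ A ts.X ℂ).flip (β i) (ψ.comp (ts.rsmul a)) b -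
          ((ContinuousLinearMap.compL ℂ A ts.X ℂ).flip (β i) ψ).comp (rmulOp A a) b =
        -(ψ (β i (b * a) - ts.rsmul a (β i b))) := by
      intro i
      simp [ContinuousLinearMap.flip_apply, ContinuousLinearMap.compL_apply,
        rmulOp_apply, map_sub]
    simp only [hkey]
    have h0 : Filter.Tendsto (fun i => ψ (β i (b * a) - ts.rsmul a (β i b)))
        atTop (𝓝 (ψ 0)) := (ψ.continuous.tendsto 0).comp ((hbm a b).2)
    rw [map_zero] at h0
    simpa using h0.neg
  · have hkey : ∀ i,
        (ContinuousLinearMap.compL ℂ A ts.X ℂ).flip (β i) (ψ.comp (ts.lsmul a)) b -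
          ((ContinuousLinearMap.compL ℂ A ts.X ℂ).flip (β i) ψ).comp (lmulOp A a) b =
        -(ψ (β i (a * b) - ts.lsmul a (β i b))) := by
      intro i
      simp [ContinuousLinearMap.flip_apply, ContinuousLinearMap.compL_apply,
        lmulOp_apply, map_sub]
    simp only [hkey]
    have h0 : Filter.Tendsto (fun i => ψ (β i (a * b) - ts.lsmul a (β i b)))
        atTop (𝓝 (ψ 0)) := (ψ.continuous.tendsto 0).comp ((hbm a b).1)
    rw [map_zero] at h0
    simpa using h0.neg
  · have hkey : ∀ i,
        (ContinuousLinearMap.compL ℂ A ts.X ℂ).flip (β i) (ts.piStar φ) a =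
          φ (ts.mulMap (β i a)) := by
      intro i
      simp [ContinuousLinearMap.flip_apply, ContinuousLinearMap.compL_apply,
        TensorSquare.piStar]
    simp only [hkey]
    exact (φ.continuous.tendsto a).comp (hπ a)

end Parts12


section Part3

set_option maxHeartbeats 1600000

variable {A}

theorem key_approx {ts : TensorSquare A} (hc : HasCentralApproximateIdentity A)
    (h : WstarApproxBimoduleMorphism A ts) (F : Finset A) {ε : ℝ} (hε : 0 < ε) :
    ∃ m : ts.X, ∀ a ∈ F, ‖ts.lsmul a m - ts.rsmul a m‖ < ε ∧ ‖ts.mulMap m * a - a‖ < ε := by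
  classical
  set Tlin : ts.X →L[ℂ] (↥F → ts.X) × (↥F → A) :=
    (ContinuousLinearMap.pi fun a : ↥F => ts.lsmul (a : A) - ts.rsmul (a : A)).prod
      (ContinuousLinearMap.pi fun a : ↥F => (rmulOp A (a : A)).comp ts.mulMap) with hTlin
  set c : (↥F → ts.X) × (↥F → A) := (0, fun a => -(a : A)) with hc'
  set T : ts.X → (↥F → ts.X) × (↥F → A) := fun m => Tlin m + c with hT
  have hT1 : ∀ (m : ts.X) (a : ↥F), (T m).1 a = ts.lsmul (a : A) m - ts.rsmul (a : A) m := by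
    intro m a; simp [hT, hTlin, hc']
  have hT2 : ∀ (m : ts.X) (a : ↥F), (T m).2 a = ts.mulMap m * (a : A) - (a : A) := by
    intro m a
    show (Tlin m).2 a + c.2 a = _
    simp [hTlin, hc', rmulOp_apply, sub_eq_add_neg]
  have h0 : (0 : (↥F → ts.X) × (↥F → A)) ∈ closure (Set.range T) := by
    by_contra h0
    have hTconv : Convex ℝ (Set.range T) := by
      rintro _ ⟨m, rfl⟩ _ ⟨m', rfl⟩ p q hp hq hpq
      refine ⟨p • m + q • m', ?_⟩
      show Tlin (p • m + q • m') + c = p • (Tlin m + c) + q • (Tlin m' + c)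
      rw [smul_add, smul_add, add_add_add_comm, ← add_smul, hpq, one_smul,
        map_add, ContinuousLinearMap.map_smul_of_tower, ContinuousLinearMap.map_smul_of_tower]
    obtain ⟨f, u, hfu, hu⟩ :=
      geometric_hahn_banach_closed_point hTconv.closure isClosed_closure h0
    have hu0 : u < 0 := by simpa using hu
    set Λ : ((↥F → ts.X) × (↥F → A)) →L[ℂ] ℂ := f.extendTo𝕜' with hΛdef
    set ψ : ↥F → (ts.X →L[ℂ] ℂ) := fun a =>
      Λ.comp ((ContinuousLinearMap.inl ℂ (↥F → ts.X) (↥F → A)).comp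
        { toLinearMap := LinearMap.single ℂ (fun _ : ↥F => ts.X) a,
          cont := by exact continuous_single (A := fun _ : ↥F => ts.X) a }) with hψ
    set φf : ↥F → (A →L[ℂ] ℂ) := fun a =>
      Λ.comp ((ContinuousLinearMap.inr ℂ (↥F → ts.X) (↥F → A)).comp
        { toLinearMap := LinearMap.single ℂ (fun _ : ↥F => A) a,
          cont := by exact continuous_single (A := fun _ : ↥F => A) a }) with hφ
    have hΛ : ∀ v : (↥F → ts.X) × (↥F → A),
        Λ v = (∑ a : ↥F, ψ a (v.1 a)) + ∑ a : ↥F, φf a (v.2 a) := by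
      intro v
      have hv : v = (∑ a : ↥F, ((Pi.single a (v.1 a) : ↥F → ts.X), (0 : ↥F → A))) +
          ∑ a : ↥F, ((0 : ↥F → ts.X), (Pi.single a (v.2 a) : ↥F → A)) := by
        refine Prod.ext ?_ ?_
        · simp only [Prod.fst_add, Prod.fst_sum]
          first
          | (simp; exact (Finset.univ_sum_single v.1).symm)
          | simp [Finset.univ_sum_single]
        · simp only [Prod.snd_add, Prod.snd_sum]
          first
          | (simp; exact (Finset.univ_sum_single v.2).symm)
          | simp [Finset.univ_sum_single]
      conv_lhs => rw [hv]
      rw [map_add, map_sum, map_sum]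
      rfl
    set χ : ts.X →L[ℂ] ℂ := ∑ a : ↥F,
      ((ψ a).comp (ts.lsmul (a : A)) - (ψ a).comp (ts.rsmul (a : A)) +
        ts.piStar ((φf a).comp (rmulOp A (a : A)))) with hχ
    set t : ℂ := ∑ a : ↥F, φf a (a : A) with ht
    have hΛT : ∀ m : ts.X, Λ (T m) = χ m - t := by
      intro m
      rw [hΛ (T m)]
      have e1 : ∀ a : ↥F, ψ a ((T m).1 a) =
          ψ a (ts.lsmul (a : A) m) - ψ a (ts.rsmul (a : A) m) := by
        intro a; rw [hT1 m a, map_sub]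
      have e2 : ∀ a : ↥F, φf a ((T m).2 a) =
          φf a (ts.mulMap m * (a : A)) - φf a (a : A) := by
        intro a; rw [hT2 m a, map_sub]
      have e3 : χ m = ∑ a : ↥F, (ψ a (ts.lsmul (a : A) m) - ψ a (ts.rsmul (a : A) m) +
          φf a (ts.mulMap m * (a : A))) := by
        rw [hχ, ContinuousLinearMap.sum_apply]
        refine Finset.sum_congr rfl fun a _ => ?_
        simp [TensorSquare.piStar, rmulOp_apply]
      simp only [e1, e2, e3, Finset.sum_add_distrib, Finset.sum_sub_distrib, ht]
      ring
    obtain ⟨ι, ne, sl, θ, hbm, hid⟩ := h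
    obtain ⟨κ, nκ, sκ, e, hcen, happ⟩ := hc
    have hδ : ∀ lam : κ, Filter.Tendsto (fun δ : ι => θ δ χ (e lam))
        atTop (𝓝 (∑ a : ↥F, φf a (e lam * (a : A)))) := by
      intro lam
      have hexp : ∀ δ : ι, θ δ χ (e lam) = ∑ a : ↥F,
          ((θ δ ((ψ a).comp (ts.lsmul (a : A))) (e lam) -
              (θ δ (ψ a)).comp (lmulOp A (a : A)) (e lam)) -
           (θ δ ((ψ a).comp (ts.rsmul (a : A))) (e lam) -
              (θ δ (ψ a)).comp (rmulOp A (a : A)) (e lam)) +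
           θ δ (ts.piStar ((φf a).comp (rmulOp A (a : A)))) (e lam)) := by
        intro δ
        rw [hχ, map_sum, ContinuousLinearMap.sum_apply]
        refine Finset.sum_congr rfl fun a _ => ?_
        rw [map_add, map_sub]
        simp only [ContinuousLinearMap.add_apply, ContinuousLinearMap.sub_apply,
          ContinuousLinearMap.comp_apply, lmulOp_apply, rmulOp_apply, hcen lam (a : A)]
        ring
      have hlim : ∀ a : ↥F, Filter.Tendsto (fun δ : ι =>
          (θ δ ((ψ a).comp (ts.lsmul (a : A))) (e lam) -
              (θ δ (ψ a)).comp (lmulOp A (a : A)) (e lam)) -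
           (θ δ ((ψ a).comp (ts.rsmul (a : A))) (e lam) -
              (θ δ (ψ a)).comp (rmulOp A (a : A)) (e lam)) +
           θ δ (ts.piStar ((φf a).comp (rmulOp A (a : A)))) (e lam))
          atTop (𝓝 (φf a (e lam * (a : A)))) := by
        intro a
        have t1 := (hbm (a : A) (ψ a) (e lam)).2
        have t2 := (hbm (a : A) (ψ a) (e lam)).1
        have t3 := hid (e lam) ((φf a).comp (rmulOp A (a : A)))
        have t4 := (t1.sub t2).add t3
        simpa [rmulOp_apply] using t4
      simp only [hexp]
      exact tendsto_finset_sum _ fun a _ => hlim a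
    have hLam : Filter.Tendsto (fun lam : κ => ∑ a : ↥F, φf a (e lam * (a : A)))
        atTop (𝓝 t) := by
      rw [ht]
      exact tendsto_finset_sum _ fun a _ =>
        ((φf a).continuous.tendsto _).comp (happ (a : A)).1
    obtain ⟨lam, hlam⟩ := (Metric.tendsto_nhds.mp hLam (-u / 2) (by linarith)).exists
    obtain ⟨δ, hδ'⟩ := (Metric.tendsto_nhds.mp (hδ lam) (-u / 2) (by linarith)).exists
    have hclose : ‖θ δ χ (e lam) - t‖ < -u := by
      calc ‖θ δ χ (e lam) - t‖ = dist (θ δ χ (e lam)) t := (dist_eq_norm _ _).symm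
        _ ≤ dist (θ δ χ (e lam)) (∑ a : ↥F, φf a (e lam * (a : A))) +
            dist (∑ a : ↥F, φf a (e lam * (a : A))) t := dist_triangle _ _ _
        _ < -u / 2 + -u / 2 := add_lt_add hδ' hlam
        _ = -u := by ring
    obtain ⟨m, hm⟩ : ∃ m : ts.X, χ m = θ δ χ (e lam) := by
      by_cases hχ0 : χ = 0
      · exact ⟨0, by simp [hχ0]⟩
      · have hex : ∃ x, χ x ≠ 0 := by
          by_contra hall
          push_neg at hall
          exact hχ0 (ContinuousLinearMap.ext fun x => by simp [hall x])
        obtain ⟨x, hx⟩ := hex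
        refine ⟨(θ δ χ (e lam) / χ x) • x, ?_⟩
        rw [map_smul, smul_eq_mul, div_mul_cancel₀ _ hx]
    have hfm : f (T m) < u := hfu (T m) (subset_closure ⟨m, rfl⟩)
    have hre : (Λ (T m)).re = f (T m) := by
      rw [hΛdef]
      rw [ContinuousLinearMap.extendTo𝕜', ContinuousLinearMap.extendTo𝕜'_apply]
      simp
    have hΛTm : ‖Λ (T m)‖ < -u := by rw [hΛT m, hm]; exact hclose
    have h2 : -‖Λ (T m)‖ ≤ (Λ (T m)).re := by
      have ha1 := neg_abs_le (Λ (T m)).re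
      have ha2 := Complex.abs_re_le_norm (Λ (T m))
      linarith
    linarith
  obtain ⟨y, hyr, hy⟩ := Metric.mem_closure_iff.mp h0 ε hε
  obtain ⟨m, rfl⟩ := hyr
  refine ⟨m, fun a ha => ?_⟩
  have hnorm : ‖T m‖ < ε := by rwa [dist_zero_left] at hy
  have hfst : ‖(T m).1‖ ≤ ‖T m‖ := norm_fst_le (T m)
  have hsnd : ‖(T m).2‖ ≤ ‖T m‖ := norm_snd_le (T m)
  constructor
  · have h1 := norm_le_pi_norm (T m).1 ⟨a, ha⟩
    rw [hT1 m ⟨a, ha⟩] at h1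
    exact lt_of_le_of_lt (h1.trans hfst) hnorm
  · have h1 := norm_le_pi_norm (T m).2 ⟨a, ha⟩
    rw [hT2 m ⟨a, ha⟩] at h1
    exact lt_of_le_of_lt (h1.trans hsnd) hnorm

theorem part_three {ts : TensorSquare A} (hc : HasCentralApproximateIdentity A)
    (h : WstarApproxBimoduleMorphism A ts) : ts.PseudoAmenable := by
  classical
  have key : ∀ (F : Finset A) (n : ℕ), ∃ m : ts.X, ∀ a ∈ F,
      ‖ts.lsmul a m - ts.rsmul a m‖ < 1 / ((n : ℝ) + 1) ∧
      ‖ts.mulMap m * a - a‖ < 1 / ((n : ℝ) + 1) :=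
    fun F n => key_approx hc h F (by positivity)
  choose m hm using key
  refine ⟨Finset A × ℕ, ⟨(∅, 0)⟩, inferInstance, fun i => m i.1 i.2, fun a => ?_, fun a => ?_⟩
  · rw [NormedAddCommGroup.tendsto_nhds_zero]
    intro ε hε
    obtain ⟨N, hN⟩ := exists_nat_gt (1 / ε)
    rw [Filter.eventually_atTop]
    refine ⟨({a}, N), fun i hi => ?_⟩
    have ha : a ∈ i.1 := by
      have := hi.1
      rw [Finset.le_iff_subset] at this
      exact Finset.singleton_subset_iff.mp this
    have h1 := (hm i.1 i.2 a ha).1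
    have hle : (1 : ℝ) / ((i.2 : ℝ) + 1) ≤ 1 / ((N : ℝ) + 1) := by
      apply one_div_le_one_div_of_le (by positivity)
      have hni : (N : ℝ) ≤ (i.2 : ℝ) := by exact_mod_cast hi.2
      linarith
    have hN1 : (1 : ℝ) / ε < (N : ℝ) + 1 := hN.trans (lt_add_one _)
    have h2 : (1 : ℝ) / ((N : ℝ) + 1) < ε := by
      rw [div_lt_iff₀ (by positivity)]
      rw [div_lt_iff₀ hε] at hN1
      linarith [mul_comm ε ((N : ℝ) + 1)]
    linarith
  · rw [Metric.tendsto_nhds]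
    intro ε hε
    obtain ⟨N, hN⟩ := exists_nat_gt (1 / ε)
    rw [Filter.eventually_atTop]
    refine ⟨({a}, N), fun i hi => ?_⟩
    have ha : a ∈ i.1 := by
      have := hi.1
      rw [Finset.le_iff_subset] at this
      exact Finset.singleton_subset_iff.mp this
    have h1 := (hm i.1 i.2 a ha).2
    rw [dist_eq_norm]
    have hle : (1 : ℝ) / ((i.2 : ℝ) + 1) ≤ 1 / ((N : ℝ) + 1) := by
      apply one_div_le_one_div_of_le (by positivity)
      have hni : (N : ℝ) ≤ (i.2 : ℝ) := by exact_mod_cast hi.2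
      linarith
    have hN1 : (1 : ℝ) / ε < (N : ℝ) + 1 := hN.trans (lt_add_one _)
    have h2 : (1 : ℝ) / ((N : ℝ) + 1) < ε := by
      rw [div_lt_iff₀ (by positivity)]
      rw [div_lt_iff₀ hε] at hN1
      linarith [mul_comm ε ((N : ℝ) + 1)]
    linarith

end Part3


/-- Theorem 2.4, first part: (i) ⇒ (ii) ⇒ (iii), and if `A` has a central
approximate identity then (iii) ⇒ (i), where (i) is pseudo-amenability of `A`. -/
theorem pseudoAmenable_implications (ts : TensorSquare A) :
    (ts.PseudoAmenable → ApproxBimoduleMorphismIntoTensor A ts) ∧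
    (ApproxBimoduleMorphismIntoTensor A ts → WstarApproxBimoduleMorphism A ts) ∧
    (HasCentralApproximateIdentity A →
      WstarApproxBimoduleMorphism A ts → ts.PseudoAmenable) :=
  ⟨part_one, part_two, fun hc h => part_three hc h⟩

end Statement1
end
end

section
/- Let B be a Segal algebra in a Banach algebra A, and suppose B contains a net (e_λ) in its centre such that (e_λ²) is an approximate identity for B. If A is approximately biflat, then B is approximately biflat. -/
noncomputable section

open Filter Topology ComplexConjugate

universe u

/-- An (abstract) Segal algebra `B` in a Banach algebra `A`: a Banach algebra `B` together
with a continuous injective multiplicative embedding with dense range (so `B` is a dense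
subalgebra of `A`), a left `A`-module action extending the multiplication (so `B` is a left
ideal in `A`), which is contractive (`‖a·b‖_B ≤ ‖a‖_A ‖b‖_B`) and essential
(`A·B` spans a dense subspace of `B`). -/
structure SegalAlgebraIn (A : Type u) (B : Type u)
    [NonUnitalNormedRing A] [NormedSpace ℂ A] [IsScalarTower ℂ A A] [SMulCommClass ℂ A A]
    [CompleteSpace A]
    [NonUnitalNormedRing B] [NormedSpace ℂ B] [IsScalarTower ℂ B B] [SMulCommClass ℂ B B]
    [CompleteSpace B] : Type u where
  incl : B →L[ℂ] A
  incl_injective : Function.Injective incl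
  incl_mul : ∀ b c : B, incl (b * c) = incl b * incl c
  denseRange : DenseRange incl
  smulA : A →L[ℂ] B →L[ℂ] B
  incl_smulA : ∀ (a : A) (b : B), incl (smulA a b) = a * incl b
  smulA_contractive : ∀ (a : A) (b : B), ‖smulA a b‖ ≤ ‖a‖ * ‖b‖
  essential : Dense (↑(Submodule.span ℂ (Set.range fun p : A × B => smulA p.1 p.2)) : Set B)


section AuxHelpers

/-- Two continuous linear maps out of a projective tensor product agreeing on elementary
tensors are equal. -/
theorem ProjTensor.ext_tmul {E F : Type u} [NormedAddCommGroup E] [NormedSpace ℂ E]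
    [NormedAddCommGroup F] [NormedSpace ℂ F] (pt : ProjTensor E F) {W : Type*}
    [NormedAddCommGroup W] [NormedSpace ℂ W] {f g : pt.X →L[ℂ] W}
    (h : ∀ a b, f (pt.tmul a b) = g (pt.tmul a b)) : f = g := by
  apply ContinuousLinearMap.ext_on pt.dense_span
  rintro x ⟨⟨a, b⟩, rfl⟩
  exact h a b

/-- Kelley's iterated-limit diagonal net construction (for `ℂ`-valued nets). -/
theorem kelley_diag {Λ Δ : Type*} [Nonempty Λ] [SemilatticeSup Λ] [Nonempty Δ]
    [SemilatticeSup Δ] {x : Λ → Δ → ℂ} {y : Λ → ℂ} {L : ℂ}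
    (hx : ∀ l, Tendsto (x l) atTop (𝓝 (y l))) (hy : Tendsto y atTop (𝓝 L)) :
    Tendsto (fun p : Λ × (Λ → Δ) => x p.1 (p.2 p.1)) atTop (𝓝 L) := by
  rw [Metric.tendsto_atTop]
  intro ε hε
  obtain ⟨l₀, hl₀⟩ := Metric.tendsto_atTop.mp hy (ε / 2) (by linarith)
  have hchoice : ∀ l, ∃ d₀ : Δ, ∀ d ≥ d₀, dist (x l d) (y l) < ε / 2 := fun l =>
    Metric.tendsto_atTop.mp (hx l) (ε / 2) (by linarith)
  choose f₀ hf₀ using hchoice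
  refine ⟨(l₀, f₀), fun p hp => ?_⟩
  have h1 := hl₀ p.1 hp.1
  have h2 := hf₀ p.1 (p.2 p.1) (hp.2 p.1)
  calc dist (x p.1 (p.2 p.1)) L ≤ dist (x p.1 (p.2 p.1)) (y p.1) + dist (y p.1) L :=
        dist_triangle _ _ _
    _ < ε / 2 + ε / 2 := add_lt_add h2 h1
    _ = ε := by ring

end AuxHelpers

/-- Proposition 2.5: let `B` be a Segal algebra in a Banach algebra `A`
containing a net `(e_λ)` in its centre such that `(e_λ²)` is an approximate identity for `B`.
If `A` is approximately biflat, then so is `B`. -/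
theorem segalAlgebra_approximatelyBiflat (A B : Type u)
    [NonUnitalNormedRing A] [NormedSpace ℂ A] [IsScalarTower ℂ A A] [SMulCommClass ℂ A A]
    [CompleteSpace A]
    [NonUnitalNormedRing B] [NormedSpace ℂ B] [IsScalarTower ℂ B B] [SMulCommClass ℂ B B]
    [CompleteSpace B]
    (S : SegalAlgebraIn A B) (tsA : TensorSquare A) (tsB : TensorSquare B)
    (hnet : ∃ (ι : Type u) (ne : Nonempty ι) (sl : SemilatticeSup ι) (e : ι → B),
      letI := ne
      letI := sl
      (∀ (i : ι) (c : B), e i * c = c * e i) ∧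
        ∀ b : B, Tendsto (fun i => e i * e i * b) atTop (𝓝 b) ∧
          Tendsto (fun i => b * (e i * e i)) atTop (𝓝 b))
    (hA : tsA.ApproximatelyBiflat) : tsB.ApproximatelyBiflat := by

  classical
  obtain ⟨Λ, neΛ, slΛ, e, hcent, happ⟩ := hnet
  obtain ⟨Δ, neΔ, slΔ, θ, hbm, hconv⟩ := hA
  letI := neΛ; letI := slΛ; letI := neΔ; letI := slΔ
  -- `incl (e l)` is central in `A`
  have hcentA : ∀ (l : Λ) (a : A), S.incl (e l) * a = a * S.incl (e l) := by
    intro l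
    have heq : (fun a : A => S.incl (e l) * a) = fun a : A => a * S.incl (e l) := by
      refine S.denseRange.equalizer (continuous_mul_left _) (continuous_mul_right _) ?_
      funext b
      simp only [Function.comp]
      rw [← S.incl_mul, ← S.incl_mul, hcent l b]
    exact fun a => congrFun heq a
  set me : Λ → (A →L[ℂ] B) := fun l => S.smulA.flip (e l) with hme
  have hme_apply : ∀ l a, me l a = S.smulA a (e l) := fun l a => rfl
  have hm1 : ∀ (l : Λ) (a a' : A), me l a * me l a' = S.smulA (a * a') (e l * e l) := by
    intro l a a'
    apply S.incl_injective
    rw [S.incl_mul, hme_apply, hme_apply, S.incl_smulA, S.incl_smulA, S.incl_smulA,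
      S.incl_mul]
    simp only [mul_assoc]
    rw [← mul_assoc (S.incl (e l)) a' (S.incl (e l)), hcentA l a',
      mul_assoc a' (S.incl (e l)) (S.incl (e l))]
  have hm2 : ∀ (l : Λ) (b₀ : B) (a : A), me l a * b₀ = me l (a * S.incl b₀) := by
    intro l b₀ a
    apply S.incl_injective
    rw [S.incl_mul, hme_apply, hme_apply, S.incl_smulA, S.incl_smulA, mul_assoc,
      ← S.incl_mul, hcent l b₀, S.incl_mul, ← mul_assoc]
  have hm3 : ∀ (l : Λ) (b₀ : B) (a : A), b₀ * me l a = me l (S.incl b₀ * a) := by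
    intro l b₀ a
    apply S.incl_injective
    rw [S.incl_mul, hme_apply, hme_apply, S.incl_smulA, S.incl_smulA, mul_assoc]
  have hm4 : ∀ (b m : B), S.smulA (S.incl b) m = b * m := by
    intro b m
    apply S.incl_injective
    rw [S.incl_smulA, S.incl_mul]
  -- the map `T l : A ⊗̂ A → B ⊗̂ B`, `a ⊗ a' ↦ (a·e_l) ⊗ (a'·e_l)`
  have hTex : ∀ l : Λ, ∃ T : tsA.X →L[ℂ] tsB.X, ∀ a a' : A,
      T (tsA.tmul a a') = tsB.tmul (me l a) (me l a') := by
    intro l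
    obtain ⟨L, -, hL⟩ := tsA.lift tsB.X
      (((ContinuousLinearMap.compL ℂ A B tsB.X).flip (me l)).comp (tsB.tmul.comp (me l)))
    refine ⟨L, fun a a' => ?_⟩
    rw [hL]
    simp [ContinuousLinearMap.compL_apply]
  choose T hT using hTex
  let preT : Λ → ((tsB.X →L[ℂ] ℂ) →L[ℂ] (tsA.X →L[ℂ] ℂ)) := fun l =>
    (ContinuousLinearMap.compL ℂ tsA.X tsB.X ℂ).flip (T l)
  let preI : (A →L[ℂ] ℂ) →L[ℂ] (B →L[ℂ] ℂ) :=
    (ContinuousLinearMap.compL ℂ B A ℂ).flip S.incl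
  let Θ : Λ × (Λ → Δ) → ((tsB.X →L[ℂ] ℂ) →L[ℂ] (B →L[ℂ] ℂ)) := fun p =>
    (preI.comp (θ (p.2 p.1))).comp (preT p.1)
  have hΘ_apply : ∀ (p : Λ × (Λ → Δ)) (ψ : tsB.X →L[ℂ] ℂ) (b : B),
      Θ p ψ b = θ (p.2 p.1) (ψ.comp (T p.1)) (S.incl b) := by
    intro p ψ b
    simp only [Θ, preI, preT, ContinuousLinearMap.comp_apply,
      ContinuousLinearMap.flip_apply, ContinuousLinearMap.compL_apply]
  refine ⟨Λ × (Λ → Δ), inferInstance, inferInstance, Θ, ?_, ?_⟩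
  · -- bimodule morphism property
    rintro ⟨l, f⟩ a ψ
    constructor
    · have key : (ψ.comp (tsB.rsmul a)).comp (T l)
          = (ψ.comp (T l)).comp (tsA.rsmul (S.incl a)) := by
        apply tsA.toProjTensor.ext_tmul
        intro x y
        simp only [ContinuousLinearMap.comp_apply, hT, tsB.rsmul_tmul, tsA.rsmul_tmul]
        rw [hm2]
      ext b
      simp only [Θ, preI, preT, ContinuousLinearMap.comp_apply,
        ContinuousLinearMap.flip_apply, ContinuousLinearMap.compL_apply, rmulOp,
        ContinuousLinearMap.mul_apply']
      rw [key, (hbm (f l) (S.incl a) (ψ.comp (T l))).1]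
      simp only [ContinuousLinearMap.comp_apply, rmulOp, ContinuousLinearMap.flip_apply,
        ContinuousLinearMap.mul_apply']
      rw [← S.incl_mul]
    · have key : (ψ.comp (tsB.lsmul a)).comp (T l)
          = (ψ.comp (T l)).comp (tsA.lsmul (S.incl a)) := by
        apply tsA.toProjTensor.ext_tmul
        intro x y
        simp only [ContinuousLinearMap.comp_apply, hT, tsB.lsmul_tmul, tsA.lsmul_tmul]
        rw [hm3]
      ext b
      simp only [Θ, preI, preT, ContinuousLinearMap.comp_apply,
        ContinuousLinearMap.flip_apply, ContinuousLinearMap.compL_apply, lmulOp,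
        ContinuousLinearMap.mul_apply']
      rw [key, (hbm (f l) (S.incl a) (ψ.comp (T l))).2]
      simp only [ContinuousLinearMap.comp_apply, lmulOp, ContinuousLinearMap.mul_apply']
      rw [← S.incl_mul]
  · -- convergence
    intro b φ
    have key : ∀ l : Λ, (tsB.piStar φ).comp (T l)
        = tsA.piStar (φ.comp (S.smulA.flip (e l * e l))) := by
      intro l
      apply tsA.toProjTensor.ext_tmul
      intro x y
      simp only [TensorSquare.piStar, ContinuousLinearMap.comp_apply, hT,
        tsB.mulMap_tmul, tsA.mulMap_tmul, ContinuousLinearMap.flip_apply]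
      rw [hm1]
    have hval : (fun i : Λ × (Λ → Δ) => Θ i (tsB.piStar φ) b)
        = fun p : Λ × (Λ → Δ) =>
          θ (p.2 p.1) (tsA.piStar (φ.comp (S.smulA.flip (e p.1 * e p.1)))) (S.incl b) := by
      funext p
      rw [hΘ_apply, key]
    rw [hval]
    refine kelley_diag
      (x := fun (l : Λ) (d : Δ) =>
        θ d (tsA.piStar (φ.comp (S.smulA.flip (e l * e l)))) (S.incl b))
      (y := fun l => φ (b * (e l * e l))) ?_ ?_
    · intro l
      have h1 := hconv (S.incl b) (φ.comp (S.smulA.flip (e l * e l)))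
      have h2 : (φ.comp (S.smulA.flip (e l * e l))) (S.incl b) = φ (b * (e l * e l)) := by
        simp only [ContinuousLinearMap.comp_apply, ContinuousLinearMap.flip_apply]
        rw [hm4]
      rwa [h2] at h1
    · exact (φ.continuous.tendsto b).comp (happ b).2
end
end

section
/- Let A be a Banach algebra containing a directed family of closed ideals {A_γ : γ ∈ Γ} such that for each γ there is a bounded homomorphic projection P_γ of A onto A_γ. Suppose that either (i) A has a central approximate identity (e_λ) contained in the union of the A_γ, or (ii) ‖P_γ a − a‖ → 0 for each a ∈ A. If each A_γ is approximately biflat, then A is approximately biflat. -/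
noncomputable section

open Filter Topology ComplexConjugate

universe u

set_option maxHeartbeats 2000000 in
/-- Proposition 2.7(a): let `A` be a Banach algebra containing a directed
family of closed ideals `{A_γ}` (realized here as isometrically embedded Banach algebras
`B γ`), with bounded homomorphic projections `P γ` of `A` onto `A_γ`.  If (i) `A` has a
central approximate identity contained in `⋃ γ, A_γ`, or (ii) `‖P γ a - a‖ → 0` for each
`a ∈ A` (along the directed family), and each `A_γ` is approximately biflat, then `A` is
approximately biflat. -/
theorem directedUnion_approximatelyBiflat
    (A : Type u) [NonUnitalNormedRing A] [NormedSpace ℂ A] [IsScalarTower ℂ A A]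
    [SMulCommClass ℂ A A] [CompleteSpace A] (tsA : TensorSquare A)
    (Γ : Type u) (B : Γ → Type u) [∀ γ, NonUnitalNormedRing (B γ)]
    [∀ γ, NormedSpace ℂ (B γ)] [∀ γ, IsScalarTower ℂ (B γ) (B γ)]
    [∀ γ, SMulCommClass ℂ (B γ) (B γ)] [∀ γ, CompleteSpace (B γ)]
    (j : ∀ γ, B γ →L[ℂ] A)
    (hj_isometry : ∀ (γ) (b : B γ), ‖j γ b‖ = ‖b‖)
    (hj_mul : ∀ (γ) (b c : B γ), j γ (b * c) = j γ b * j γ c)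
    (hj_ideal : ∀ (γ) (a : A) (b : B γ),
      a * j γ b ∈ Set.range (j γ) ∧ j γ b * a ∈ Set.range (j γ))
    (hdirected : ∀ γ₁ γ₂ : Γ, ∃ γ₃, Set.range (j γ₁) ∪ Set.range (j γ₂) ⊆ Set.range (j γ₃))
    (P : Γ → (A →L[ℂ] A))
    (hP_mul : ∀ (γ) (a b : A), P γ (a * b) = P γ a * P γ b)
    (hP_range : ∀ γ, Set.range (P γ) = Set.range (j γ))
    (hP_proj : ∀ (γ) (b : B γ), P γ (j γ b) = j γ b)
    (tsB : ∀ γ, TensorSquare (B γ))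
    (hbiflat : ∀ γ, (tsB γ).ApproximatelyBiflat)
    (hcase :
      (∃ (ι : Type u) (ne : Nonempty ι) (sl : SemilatticeSup ι) (e : ι → A),
        letI := ne
        letI := sl
        (∀ i, e i ∈ ⋃ γ, Set.range (j γ)) ∧ (∀ (i) (a : A), e i * a = a * e i) ∧
          ∀ a : A, Tendsto (fun i => e i * a) atTop (𝓝 a) ∧
            Tendsto (fun i => a * e i) atTop (𝓝 a)) ∨
      (∀ a : A, ∀ ε > (0 : ℝ), ∃ γ, ∀ γ',
        Set.range (j γ) ⊆ Set.range (j γ') → ‖P γ' a - a‖ < ε)) :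
    tsA.ApproximatelyBiflat := by
  classical
  have hjinj : ∀ γ, Function.Injective (j γ) := by
    intro γ b c h
    have h1 : ‖j γ (b - c)‖ = ‖b - c‖ := hj_isometry γ _
    rw [map_sub, h, sub_self, norm_zero] at h1
    exact sub_eq_zero.mp (norm_eq_zero.mp h1.symm)
  have hΓ : Nonempty Γ := by
    rcases hcase with ⟨ι, ne, sl, e, hmem, -, -⟩ | h2
    · obtain ⟨γ, -⟩ := Set.mem_iUnion.mp (hmem ne.some)
      exact ⟨γ⟩
    · obtain ⟨γ, -⟩ := h2 0 1 one_pos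
      exact ⟨γ⟩
  have hfix : ∀ γ (x : A), x ∈ Set.range (j γ) → P γ x = x := by
    rintro γ x ⟨b, rfl⟩; exact hP_proj γ b
  have hideal_r : ∀ γ (b : B γ) (a : A), j γ b * a = j γ b * P γ a := by
    intro γ b a
    have h1 : P γ (j γ b * a) = j γ b * a := hfix γ _ (hj_ideal γ a b).2
    rw [hP_mul, hP_proj] at h1
    exact h1.symm
  have hideal_l : ∀ γ (b : B γ) (a : A), a * j γ b = P γ a * j γ b := by
    intro γ b a
    have h1 : P γ (a * j γ b) = a * j γ b := hfix γ _ (hj_ideal γ a b).1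
    rw [hP_mul, hP_proj] at h1
    exact h1.symm
  have extB : ∀ γ (f g : (tsB γ).X →L[ℂ] ℂ),
      (∀ b c : B γ, f ((tsB γ).tmul b c) = g ((tsB γ).tmul b c)) → f = g := by
    intro γ f g h
    refine ContinuousLinearMap.ext_on (tsB γ).dense_span ?_
    rintro x ⟨⟨b, c⟩, rfl⟩
    exact h b c
  have hub : ∀ s : Finset Γ, ∃ γ, ∀ γ' ∈ s, Set.range (j γ') ⊆ Set.range (j γ) := by
    intro s
    induction s using Finset.induction_on with
    | empty => exact ⟨hΓ.some, by simp⟩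
    | @insert a s _ ih =>
      obtain ⟨γ₁, h₁⟩ := ih
      obtain ⟨γ₂, h₂⟩ := hdirected a γ₁
      refine ⟨γ₂, ?_⟩
      intro γ' hγ'
      rcases Finset.mem_insert.mp hγ' with rfl | hmem
      · exact (Set.union_subset_iff.mp h₂).1
      · exact (h₁ γ' hmem).trans (Set.union_subset_iff.mp h₂).2
  -- transfer lemma: for each γ we can approximate `φ ∘ P γ`
  have transfer : ∀ (γ : Γ) (F : Finset (A × (A →L[ℂ] ℂ))) (ε : ℝ), 0 < ε →
      ∃ Θ : (tsA.X →L[ℂ] ℂ) →L[ℂ] (A →L[ℂ] ℂ), tsA.IsBimoduleMorphism Θ ∧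
        ∀ p ∈ F, ‖Θ (tsA.piStar p.2) p.1 - p.2 (P γ p.1)‖ < ε := by
    intro γ F ε hε
    -- build the inverse-of-j-composed-with-P map q
    have hex : ∀ a : A, ∃ b : B γ, j γ b = P γ a := by
      intro a
      have : P γ a ∈ Set.range (j γ) := (hP_range γ) ▸ Set.mem_range_self a
      exact this
    choose q0 hq0 using hex
    let qL : A →ₗ[ℂ] B γ :=
      { toFun := q0
        map_add' := fun a b => hjinj γ (by rw [map_add, hq0, hq0, hq0, map_add])
        map_smul' := fun c a => hjinj γ (by
          rw [map_smul, hq0, RingHom.id_apply, hq0, map_smul]) }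
    have hqbound : ∀ a, ‖qL a‖ ≤ ‖P γ‖ * ‖a‖ := fun a => by
      have h1 : ‖j γ (q0 a)‖ = ‖q0 a‖ := hj_isometry γ _
      calc ‖qL a‖ = ‖j γ (q0 a)‖ := h1.symm
        _ = ‖P γ a‖ := by rw [hq0]
        _ ≤ ‖P γ‖ * ‖a‖ := (P γ).le_opNorm a
    let q : A →L[ℂ] B γ := qL.mkContinuous ‖P γ‖ hqbound
    have hq : ∀ a, j γ (q a) = P γ a := hq0
    have hqmul : ∀ x a : A, q (x * a) = q x * q a := by
      intro x a
      apply hjinj γ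
      rw [hq, hj_mul, hq, hq, hP_mul]
    -- build the tensor transfer map T
    let bilin : B γ →L[ℂ] B γ →L[ℂ] tsA.X :=
      (((tsA.tmul).comp (j γ)).flip.comp (j γ)).flip
    have hbilin : ∀ b c, bilin b c = tsA.tmul (j γ b) (j γ c) := fun b c => rfl
    obtain ⟨T, -, hT⟩ := (tsB γ).lift tsA.X bilin
    let precompT : (tsA.X →L[ℂ] ℂ) →L[ℂ] ((tsB γ).X →L[ℂ] ℂ) :=
      (ContinuousLinearMap.compL ℂ (tsB γ).X tsA.X ℂ).flip T
    let postq : ((B γ) →L[ℂ] ℂ) →L[ℂ] (A →L[ℂ] ℂ) :=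
      (ContinuousLinearMap.compL ℂ A (B γ) ℂ).flip q
    obtain ⟨ι', ne', sl', θ, hθ⟩ := hbiflat γ
    letI := ne'
    letI := sl'
    obtain ⟨hθbim, hθconv⟩ := hθ
    let Θf : ι' → ((tsA.X →L[ℂ] ℂ) →L[ℂ] (A →L[ℂ] ℂ)) :=
      fun i => postq.comp ((θ i).comp precompT)
    have hΘfapp : ∀ i (χ : tsA.X →L[ℂ] ℂ) (x : A),
        Θf i χ x = θ i (χ.comp T) (q x) := fun _ _ _ => rfl
    -- bimodule morphism property
    have hbimA : ∀ i, tsA.IsBimoduleMorphism (Θf i) := by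
      intro i a ψ
      constructor
      · have h1 : (ψ.comp (tsA.rsmul a)).comp T = (ψ.comp T).comp ((tsB γ).rsmul (q a)) := by
          apply extB
          intro b c
          simp only [ContinuousLinearMap.comp_apply]
          rw [hT, hbilin, tsA.rsmul_tmul, (tsB γ).rsmul_tmul, hT, hbilin, hj_mul, hq,
            ← hideal_r γ c a]
        apply ContinuousLinearMap.ext
        intro x
        show θ i ((ψ.comp (tsA.rsmul a)).comp T) (q x) = θ i (ψ.comp T) (q (x * a))
        rw [h1, (hθbim i (q a) (ψ.comp T)).1, hqmul]
        rfl
      · have h1 : (ψ.comp (tsA.lsmul a)).comp T = (ψ.comp T).comp ((tsB γ).lsmul (q a)) := by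
          apply extB
          intro b c
          simp only [ContinuousLinearMap.comp_apply]
          rw [hT, hbilin, tsA.lsmul_tmul, (tsB γ).lsmul_tmul, hT, hbilin, hj_mul, hq,
            ← hideal_l γ b a]
        apply ContinuousLinearMap.ext
        intro x
        show θ i ((ψ.comp (tsA.lsmul a)).comp T) (q x) = θ i (ψ.comp T) (q (a * x))
        rw [h1, (hθbim i (q a) (ψ.comp T)).2, hqmul]
        rfl
    -- convergence to φ ∘ P γ
    have hpi : ∀ φ : A →L[ℂ] ℂ,
        ((tsA.piStar φ).comp T) = (tsB γ).piStar (φ.comp (j γ)) := by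
      intro φ
      apply extB
      intro b c
      simp only [ContinuousLinearMap.comp_apply]
      rw [hT, hbilin]
      show φ (tsA.mulMap _) = φ (j γ ((tsB γ).mulMap _))
      rw [tsA.mulMap_tmul, (tsB γ).mulMap_tmul, hj_mul]
    have hev : ∀ᶠ i in atTop, ∀ p ∈ F,
        ‖Θf i (tsA.piStar p.2) p.1 - p.2 (P γ p.1)‖ < ε := by
      rw [Filter.eventually_all_finset F]
      intro p _
      have h3 := hθconv (q p.1) (p.2.comp (j γ))
      have h4 : Tendsto (fun i => Θf i (tsA.piStar p.2) p.1) atTop (𝓝 (p.2 (P γ p.1))) := by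
        have hfun : (fun i => Θf i (tsA.piStar p.2) p.1)
            = fun i => θ i ((tsB γ).piStar (p.2.comp (j γ))) (q p.1) := by
          funext i
          rw [hΘfapp, hpi]
        have heq : (p.2.comp (j γ)) (q p.1) = p.2 (P γ p.1) := by
          simp only [ContinuousLinearMap.comp_apply, hq]
        rw [hfun, ← heq]
        exact h3
      filter_upwards [Metric.tendsto_nhds.mp h4 ε hε] with i hi
      rwa [dist_eq_norm] at hi
    obtain ⟨i₀, hi₀⟩ := hev.exists
    exact ⟨Θf i₀, hbimA i₀, hi₀⟩
  -- key approximation lemma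
  have key : ∀ (F : Finset (A × (A →L[ℂ] ℂ))) (n : ℕ),
      ∃ Θ : (tsA.X →L[ℂ] ℂ) →L[ℂ] (A →L[ℂ] ℂ), tsA.IsBimoduleMorphism Θ ∧
        ∀ p ∈ F, ‖Θ (tsA.piStar p.2) p.1 - p.2 p.1‖ < 1 / (n + 1) := by
    intro F n
    set ε0 : ℝ := 1 / (2 * (n + 1)) with hε0def
    have hε0 : 0 < ε0 := by positivity
    have hsum : ε0 + ε0 = 1 / (n + 1 : ℝ) := by
      rw [hε0def, ← add_div, show (1:ℝ)+1 = 2 by norm_num, mul_comm,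
        div_mul_eq_div_div_swap]
      simp
    have hbound : ∀ (φ : A →L[ℂ] ℂ) (x y : A), ‖x - y‖ < ε0 / (‖φ‖ + 1) →
        ‖φ x - φ y‖ ≤ ε0 := by
      intro φ x y hxy
      rw [← map_sub]
      calc ‖φ (x - y)‖ ≤ ‖φ‖ * ‖x - y‖ := φ.le_opNorm _
        _ ≤ ‖φ‖ * (ε0 / (‖φ‖ + 1)) := by
            exact mul_le_mul_of_nonneg_left hxy.le (norm_nonneg _)
        _ ≤ (‖φ‖ + 1) * (ε0 / (‖φ‖ + 1)) := by
            have h1 : (0:ℝ) ≤ ε0 / (‖φ‖ + 1) := by positivity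
            have h2 : ‖φ‖ ≤ ‖φ‖ + 1 := by linarith
            exact mul_le_mul_of_nonneg_right h2 h1
        _ = ε0 := by
            field_simp
    rcases hcase with ⟨ι, ne, sl, e, hmem, hcent, hai⟩ | h2
    · -- case (i): central approximate identity
      letI := ne; letI := sl
      have hev : ∀ᶠ i in atTop, ∀ p ∈ F, ‖e i * p.1 - p.1‖ < ε0 / (‖p.2‖ + 1) := by
        rw [Filter.eventually_all_finset F]
        intro p _
        have hδ : (0:ℝ) < ε0 / (‖p.2‖ + 1) := by positivity
        filter_upwards [Metric.tendsto_nhds.mp (hai p.1).1 _ hδ] with i hi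
        rwa [dist_eq_norm] at hi
      obtain ⟨i₀, hi₀⟩ := hev.exists
      obtain ⟨γ₀, b₀, hb₀⟩ := Set.mem_iUnion.mp (hmem i₀)
      obtain ⟨Θ, hΘbim, hΘ⟩ := transfer γ₀ (F.image (fun p => (e i₀ * p.1, p.2))) ε0 hε0
      let L : (A →L[ℂ] ℂ) →L[ℂ] (A →L[ℂ] ℂ) :=
        (ContinuousLinearMap.compL ℂ A A ℂ).flip (lmulOp A (e i₀))
      have hLapp : ∀ (χ : tsA.X →L[ℂ] ℂ) (x : A),
          (L.comp Θ) χ x = Θ χ (e i₀ * x) := fun _ _ => rfl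
      refine ⟨L.comp Θ, ?_, ?_⟩
      · intro a ψ
        obtain ⟨h1, h2⟩ := hΘbim a ψ
        constructor
        · apply ContinuousLinearMap.ext
          intro x
          show Θ (ψ.comp (tsA.rsmul a)) (e i₀ * x) = Θ ψ (e i₀ * (x * a))
          rw [h1]
          show Θ ψ ((e i₀ * x) * a) = Θ ψ (e i₀ * (x * a))
          rw [mul_assoc]
        · apply ContinuousLinearMap.ext
          intro x
          show Θ (ψ.comp (tsA.lsmul a)) (e i₀ * x) = Θ ψ (e i₀ * (a * x))
          rw [h2]
          show Θ ψ (a * (e i₀ * x)) = Θ ψ (e i₀ * (a * x))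
          rw [← mul_assoc, ← mul_assoc, hcent i₀ a]
      · intro p hp
        have hp' := hΘ (e i₀ * p.1, p.2)
          (Finset.mem_image_of_mem (fun p => (e i₀ * p.1, p.2)) hp)
        have hfix0 : P γ₀ (e i₀ * p.1) = e i₀ * p.1 := by
          rw [← hb₀]
          exact hfix γ₀ _ (hj_ideal γ₀ p.1 b₀).2
        rw [hfix0] at hp'
        have h5 : ‖p.2 (e i₀ * p.1) - p.2 p.1‖ ≤ ε0 := hbound p.2 _ _ (hi₀ p hp)
        calc ‖(L.comp Θ) (tsA.piStar p.2) p.1 - p.2 p.1‖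
            = ‖Θ (tsA.piStar p.2) (e i₀ * p.1) - p.2 p.1‖ := by rw [hLapp]
          _ ≤ ‖Θ (tsA.piStar p.2) (e i₀ * p.1) - p.2 (e i₀ * p.1)‖
              + ‖p.2 (e i₀ * p.1) - p.2 p.1‖ := norm_sub_le_norm_sub_add_norm_sub _ _ _
          _ < ε0 + ε0 := by
              exact add_lt_add_of_lt_of_le hp' h5
          _ = 1 / (n + 1) := hsum
    · -- case (ii): P γ a → a
      choose γf hγf using fun p : A × (A →L[ℂ] ℂ) =>
        h2 p.1 (ε0 / (‖p.2‖ + 1)) (by positivity)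
      obtain ⟨γs, hγs⟩ := hub (F.image γf)
      obtain ⟨Θ, hΘbim, hΘ⟩ := transfer γs F ε0 hε0
      refine ⟨Θ, hΘbim, ?_⟩
      intro p hp
      have hPa : ‖P γs p.1 - p.1‖ < ε0 / (‖p.2‖ + 1) :=
        hγf p γs (hγs (γf p) (Finset.mem_image_of_mem γf hp))
      have h5 : ‖p.2 (P γs p.1) - p.2 p.1‖ ≤ ε0 := hbound p.2 _ _ hPa
      calc ‖Θ (tsA.piStar p.2) p.1 - p.2 p.1‖
          ≤ ‖Θ (tsA.piStar p.2) p.1 - p.2 (P γs p.1)‖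
            + ‖p.2 (P γs p.1) - p.2 p.1‖ := norm_sub_le_norm_sub_add_norm_sub _ _ _
        _ < ε0 + ε0 := add_lt_add_of_lt_of_le (hΘ p hp) h5
        _ = 1 / (n + 1) := hsum
  -- assemble the net
  choose Θfun hΘbim hΘclose using fun Fn : Finset (A × (A →L[ℂ] ℂ)) × ℕ => key Fn.1 Fn.2
  letI : DecidableEq (A × (A →L[ℂ] ℂ)) := Classical.decEq _
  refine ⟨Finset (A × (A →L[ℂ] ℂ)) × ℕ, inferInstance, inferInstance, Θfun,
    fun Fn => hΘbim Fn, ?_⟩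
  intro a φ
  rw [Metric.tendsto_atTop]
  intro ε hε
  obtain ⟨n, hn⟩ := exists_nat_one_div_lt hε
  refine ⟨({(a, φ)}, n), ?_⟩
  rintro ⟨F, m⟩ hFm
  have hmem : (a, φ) ∈ F := hFm.1 (Finset.mem_singleton_self _)
  rw [dist_eq_norm]
  calc ‖Θfun (F, m) (tsA.piStar φ) a - φ a‖ < 1 / (m + 1) := hΘclose (F, m) (a, φ) hmem
    _ ≤ 1 / (n + 1) := by
        apply one_div_le_one_div_of_le (by positivity)
        have : (n : ℝ) ≤ m := Nat.cast_le.mpr hFm.2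
        linarith
    _ < ε := hn
end
end

section
/- Let {A_i : i ∈ I} be a family of Banach algebras, each of which is approximately biflat. Then for every 1 ≤ p < ∞, the ℓᵖ-direct sum ⊕ᵖ_{i∈I} A_i (with coordinatewise multiplication) is approximately biflat. -/
noncomputable section

open Filter Topology ComplexConjugate

universe u

set_option maxHeartbeats 4000000 in
/-- Proposition 2.8(i): let `{A_i : i ∈ I}` be a family of approximately
biflat Banach algebras.  Then for `1 ≤ p < ∞`, the `ℓᵖ`-direct sum `⊕ᵖ_{i∈I} A_i` (with
coordinatewise multiplication) is approximately biflat.  The direct sum is realized as a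
Banach algebra `D` together with isometric multiplicative embeddings `emb i : A i → D` with
orthogonal ranges spanning a dense subspace, whose finitely supported sums carry the
`ℓᵖ`-norm. -/
theorem lpDirectSum_approximatelyBiflat
    (p : ℝ) (hp : 1 ≤ p)
    (I : Type u) (A : I → Type u) [∀ i, NonUnitalNormedRing (A i)]
    [∀ i, NormedSpace ℂ (A i)] [∀ i, IsScalarTower ℂ (A i) (A i)]
    [∀ i, SMulCommClass ℂ (A i) (A i)] [∀ i, CompleteSpace (A i)]
    (D : Type u) [NonUnitalNormedRing D] [NormedSpace ℂ D] [IsScalarTower ℂ D D]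
    [SMulCommClass ℂ D D] [CompleteSpace D]
    (emb : ∀ i, A i →L[ℂ] D)
    (hemb_isometry : ∀ (i) (a : A i), ‖emb i a‖ = ‖a‖)
    (hemb_mul : ∀ (i) (a b : A i), emb i (a * b) = emb i a * emb i b)
    (hemb_orth : ∀ i j, i ≠ j → ∀ (a : A i) (b : A j), emb i a * emb j b = 0)
    (hemb_norm : ∀ (s : Finset I) (a : ∀ i, A i),
      ‖∑ i ∈ s, emb i (a i)‖ ^ p = ∑ i ∈ s, ‖a i‖ ^ p)
    (hemb_dense :
      Dense (↑(Submodule.span ℂ (⋃ i, Set.range (emb i))) : Set D))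
    (tsA : ∀ i, TensorSquare (A i)) (tsD : TensorSquare D)
    (hbiflat : ∀ i, (tsA i).ApproximatelyBiflat) :
    tsD.ApproximatelyBiflat := by
  classical
  have hp0 : (0:ℝ) < p := lt_of_lt_of_le one_pos hp
  set S : Submodule ℂ D := Submodule.span ℂ (⋃ i, Set.range (emb i)) with hSdef
  -- if a finitely supported sum vanishes, all coordinates vanish
  have hzero : ∀ (s : Finset I) (a : ∀ k, A k), ∑ j ∈ s, emb j (a j) = 0 →
      ∀ j ∈ s, a j = 0 := by
    intro s a h j hj
    by_contra hne
    have h1 := hemb_norm s a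
    rw [h, norm_zero, Real.zero_rpow (ne_of_gt hp0)] at h1
    have hnn : ∀ k ∈ s, (0:ℝ) ≤ ‖a k‖ ^ p := fun k _ =>
      Real.rpow_nonneg (norm_nonneg _) p
    have h2 := (Finset.sum_eq_zero_iff_of_nonneg hnn).mp h1.symm j hj
    have hpos : 0 < ‖a j‖ ^ p :=
      Real.rpow_pos_of_pos (norm_pos_iff.mpr hne) p
    exact absurd h2 (ne_of_gt hpos)
  -- every element of the span has a normalized finite representation
  have hrep : ∀ x ∈ S, ∃ (s : Finset I) (a : ∀ k, A k),
      (∀ j ∉ s, a j = 0) ∧ x = ∑ j ∈ s, emb j (a j) := by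
    intro x hx
    induction hx using Submodule.span_induction with
    | mem x hx =>
      obtain ⟨i, b, rfl⟩ : ∃ i b, emb i b = x := by
        rw [Set.mem_iUnion] at hx
        obtain ⟨i, b, hb⟩ := hx
        exact ⟨i, b, hb⟩
      refine ⟨{i}, Pi.single i b, fun j hj => Pi.single_eq_of_ne (by simpa using hj) b, ?_⟩
      simp
    | zero => exact ⟨∅, 0, fun j _ => rfl, by simp⟩
    | add x y _ _ hx hy =>
      obtain ⟨s, a, ha, rfl⟩ := hx
      obtain ⟨t, b, hb, rfl⟩ := hy
      refine ⟨s ∪ t, fun k => a k + b k, fun j hj => ?_, ?_⟩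
      · show a j + b j = 0
        rw [ha j (fun h => hj (Finset.mem_union_left _ h)),
          hb j (fun h => hj (Finset.mem_union_right _ h)), add_zero]
      · have hsa : ∑ j ∈ s ∪ t, emb j (a j) = ∑ j ∈ s, emb j (a j) :=
          (Finset.sum_subset Finset.subset_union_left
            (fun j _ hj => by rw [ha j hj, map_zero])).symm
        have htb : ∑ j ∈ s ∪ t, emb j (b j) = ∑ j ∈ t, emb j (b j) :=
          (Finset.sum_subset Finset.subset_union_right
            (fun j _ hj => by rw [hb j hj, map_zero])).symm
        simp only [map_add, Finset.sum_add_distrib, hsa, htb]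
    | smul r x _ hx =>
      obtain ⟨s, a, ha, rfl⟩ := hx
      refine ⟨s, fun k => r • a k, fun j hj => by show r • a j = 0; rw [ha j hj, smul_zero], ?_⟩
      rw [Finset.smul_sum]
      exact Finset.sum_congr rfl fun j _ => (map_smul (emb j) r (a j)).symm
  -- coordinates are uniquely determined
  have hcoord : ∀ (i : I) (s t : Finset I) (a b : ∀ k, A k),
      (∀ j ∉ s, a j = 0) → (∀ j ∉ t, b j = 0) →
      (∑ j ∈ s, emb j (a j)) = (∑ j ∈ t, emb j (b j)) → a i = b i := by
    intro i s t a b ha hb hab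
    have h1 : ∑ j ∈ s ∪ t, emb j (a j - b j) = 0 := by
      have hsa : ∑ j ∈ s ∪ t, emb j (a j) = ∑ j ∈ s, emb j (a j) :=
        (Finset.sum_subset Finset.subset_union_left
          (fun j _ hj => by rw [ha j hj, map_zero])).symm
      have htb : ∑ j ∈ s ∪ t, emb j (b j) = ∑ j ∈ t, emb j (b j) :=
        (Finset.sum_subset Finset.subset_union_right
          (fun j _ hj => by rw [hb j hj, map_zero])).symm
      simp only [map_sub, Finset.sum_sub_distrib, hsa, htb, hab, sub_self]
    by_cases hi : i ∈ s ∪ t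
    · exact sub_eq_zero.mp (hzero (s ∪ t) (fun j => a j - b j) h1 i hi)
    · rw [ha i (fun h => hi (Finset.mem_union_left _ h)),
        hb i (fun h => hi (Finset.mem_union_right _ h))]
  -- construct the coordinate projections
  have hPex : ∀ i, ∃ P : D →L[ℂ] A i,
      ∀ (s : Finset I) (a : ∀ k, A k), (∀ j ∉ s, a j = 0) →
        P (∑ j ∈ s, emb j (a j)) = a i := by
    intro i
    have hrep' : ∀ x : S, ∃ (s : Finset I) (a : ∀ k, A k),
        (∀ j ∉ s, a j = 0) ∧ (x : D) = ∑ j ∈ s, emb j (a j) := fun x => hrep x x.2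
    choose rs ra hra hrx using hrep'
    have hval : ∀ (x : S) (s : Finset I) (a : ∀ k, A k), (∀ j ∉ s, a j = 0) →
        (x : D) = ∑ j ∈ s, emb j (a j) → ra x i = a i := by
      intro x s a ha hx
      exact hcoord i (rs x) s (ra x) a (hra x) ha (by rw [← hrx x, ← hx])
    have hadd : ∀ x y : S, ra (x + y) i = ra x i + ra y i := by
      intro x y
      have key : ((x + y : S) : D) = ∑ j ∈ rs x ∪ rs y, emb j (ra x j + ra y j) := by
        have hsa : ∑ j ∈ rs x ∪ rs y, emb j (ra x j) = ∑ j ∈ rs x, emb j (ra x j) :=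
          (Finset.sum_subset Finset.subset_union_left
            (fun j _ hj => by rw [hra x j hj, map_zero])).symm
        have htb : ∑ j ∈ rs x ∪ rs y, emb j (ra y j) = ∑ j ∈ rs y, emb j (ra y j) :=
          (Finset.sum_subset Finset.subset_union_right
            (fun j _ hj => by rw [hra y j hj, map_zero])).symm
        push_cast
        rw [hrx x, hrx y]
        simp only [map_add, Finset.sum_add_distrib, hsa, htb]
      have := hval (x + y) (rs x ∪ rs y) (fun k => ra x k + ra y k)
        (fun j hj => by
          show ra x j + ra y j = 0
          rw [hra x j (fun h => hj (Finset.mem_union_left _ h)),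
            hra y j (fun h => hj (Finset.mem_union_right _ h)), add_zero]) key
      simpa using this
    have hsmul : ∀ (r : ℂ) (x : S), ra (r • x) i = r • ra x i := by
      intro r x
      have key : ((r • x : S) : D) = ∑ j ∈ rs x, emb j (r • ra x j) := by
        push_cast
        rw [hrx x, Finset.smul_sum]
        exact Finset.sum_congr rfl fun j _ => (map_smul (emb j) r (ra x j)).symm
      have := hval (r • x) (rs x) (fun k => r • ra x k)
        (fun j hj => by show r • ra x j = 0; rw [hra x j hj, smul_zero]) key
      simpa using this
    have hbound : ∀ x : S, ‖ra x i‖ ≤ ‖(x : D)‖ := by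
      intro x
      by_cases hi : i ∈ rs x
      · have h1 : ‖ra x i‖ ^ p ≤ ‖(x : D)‖ ^ p := by
          rw [hrx x, hemb_norm (rs x) (ra x)]
          exact Finset.single_le_sum
            (fun k _ => Real.rpow_nonneg (norm_nonneg _) p) hi
        exact (Real.rpow_le_rpow_iff (norm_nonneg _) (norm_nonneg _) hp0).mp h1
      · rw [hra x i hi, norm_zero]; exact norm_nonneg _
    let L : S →ₗ[ℂ] A i :=
      { toFun := fun x => ra x i
        map_add' := hadd
        map_smul' := hsmul }
    let Lc : S →L[ℂ] A i := L.mkContinuous 1 (fun x => by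
      rw [one_mul]
      exact hbound x)
    have hcoeS : ⇑S.subtypeL = (Subtype.val : S → D) := rfl
    have hdr : DenseRange S.subtypeL := by
      rw [DenseRange, hcoeS, Subtype.range_coe]
      exact hemb_dense
    have hui : IsUniformInducing ⇑S.subtypeL := by
      rw [hcoeS]
      exact isUniformEmbedding_subtype_val.isUniformInducing
    refine ⟨Lc.extend S.subtypeL, ?_⟩
    intro s a ha
    have hmem : (∑ j ∈ s, emb j (a j)) ∈ S :=
      Submodule.sum_mem _ (fun j _ => Submodule.subset_span
        (Set.mem_iUnion.mpr ⟨j, Set.mem_range_self _⟩))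
    have h1 := ContinuousLinearMap.extend_eq Lc (e := S.subtypeL) hdr hui ⟨_, hmem⟩
    have h2 : S.subtypeL (⟨_, hmem⟩ : S) = ∑ j ∈ s, emb j (a j) := rfl
    rw [h2] at h1
    rw [h1]
    exact hval ⟨_, hmem⟩ s a ha rfl
  choose P hP using hPex
  have hPi : ∀ i (b : A i), P i (emb i b) = b := by
    intro i b
    have h1 : emb i b = ∑ j ∈ ({i} : Finset I), emb j (Pi.single i b j) := by simp
    rw [h1, hP i {i} (Pi.single i b)
      (fun j hj => Pi.single_eq_of_ne (by simpa using hj) b), Pi.single_eq_same]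
  have hPj : ∀ i j, j ≠ i → ∀ b : A j, P i (emb j b) = 0 := by
    intro i j hne b
    have h1 : emb j b = ∑ k ∈ ({j} : Finset I), emb k (Pi.single j b k) := by simp
    rw [h1, hP i {j} (Pi.single j b)
      (fun k hk => Pi.single_eq_of_ne (by simpa using hk) b), Pi.single_eq_of_ne hne.symm b]
  -- multiplicativity relations
  have hmul_r : ∀ i (c : A i) (d : D), emb i c * d = emb i (c * P i d) := by
    intro i c
    have key : (ContinuousLinearMap.mul ℂ D (emb i c)) =
        (emb i).comp ((ContinuousLinearMap.mul ℂ (A i) c).comp (P i)) := by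
      refine ContinuousLinearMap.ext_on hemb_dense ?_
      intro x hx
      rw [Set.mem_iUnion] at hx
      obtain ⟨j, b, rfl⟩ : ∃ j b, emb j b = x := by
        obtain ⟨j, b, hb⟩ := hx; exact ⟨j, b, hb⟩
      simp only [ContinuousLinearMap.mul_apply', ContinuousLinearMap.comp_apply]
      by_cases h : j = i
      · subst h; rw [hPi, ← hemb_mul]
      · rw [hPj i j h b, mul_zero, map_zero,
          hemb_orth i j (fun hh => h hh.symm) c b]
    intro d
    have h2 := ContinuousLinearMap.ext_iff.mp key d
    simpa only [ContinuousLinearMap.mul_apply', ContinuousLinearMap.comp_apply] using h2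
  have hmul_l : ∀ i (c : A i) (d : D), d * emb i c = emb i (P i d * c) := by
    intro i c
    have key : ((ContinuousLinearMap.mul ℂ D).flip (emb i c)) =
        (emb i).comp (((ContinuousLinearMap.mul ℂ (A i)).flip c).comp (P i)) := by
      refine ContinuousLinearMap.ext_on hemb_dense ?_
      intro x hx
      rw [Set.mem_iUnion] at hx
      obtain ⟨j, b, rfl⟩ : ∃ j b, emb j b = x := by
        obtain ⟨j, b, hb⟩ := hx; exact ⟨j, b, hb⟩
      simp only [ContinuousLinearMap.flip_apply, ContinuousLinearMap.mul_apply',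
        ContinuousLinearMap.comp_apply]
      by_cases h : j = i
      · subst h; rw [hPi, ← hemb_mul]
      · rw [hPj i j h b, zero_mul, map_zero, hemb_orth j i h b c]
    intro d
    have h2 := ContinuousLinearMap.ext_iff.mp key d
    simpa only [ContinuousLinearMap.flip_apply, ContinuousLinearMap.mul_apply',
      ContinuousLinearMap.comp_apply] using h2
  have hPmul : ∀ i (d e : D), P i (d * e) = P i d * P i e := by
    intro i d e
    have key : (P i).comp ((ContinuousLinearMap.mul ℂ D).flip e) =
        ((ContinuousLinearMap.mul ℂ (A i)).flip (P i e)).comp (P i) := by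
      refine ContinuousLinearMap.ext_on hemb_dense ?_
      intro x hx
      rw [Set.mem_iUnion] at hx
      obtain ⟨j, b, rfl⟩ : ∃ j b, emb j b = x := by
        obtain ⟨j, b, hb⟩ := hx; exact ⟨j, b, hb⟩
      simp only [ContinuousLinearMap.flip_apply, ContinuousLinearMap.mul_apply',
        ContinuousLinearMap.comp_apply]
      rw [hmul_r j b e]
      by_cases h : j = i
      · subst h; rw [hPi, hPi]
      · rw [hPj i j h, hPj i j h, zero_mul]
    have h2 := ContinuousLinearMap.ext_iff.mp key d
    simpa only [ContinuousLinearMap.flip_apply, ContinuousLinearMap.mul_apply',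
      ContinuousLinearMap.comp_apply] using h2
  -- norm bound for partial-sum projections
  have hQle : ∀ (F : Finset I) (y : D), ‖∑ i ∈ F, emb i (P i y)‖ ≤ ‖y‖ := by
    intro F
    set QF : D →L[ℂ] D := ∑ i ∈ F, (emb i).comp (P i) with hQF
    have hQapp : ∀ y, QF y = ∑ i ∈ F, emb i (P i y) := by
      intro y
      rw [hQF, ContinuousLinearMap.sum_apply]
      exact Finset.sum_congr rfl fun i _ => rfl
    suffices h : ∀ y, ‖QF y‖ ≤ ‖y‖ by
      intro y; rw [← hQapp]; exact h y
    have hclosed : IsClosed {y : D | ‖QF y‖ ≤ ‖y‖} :=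
      isClosed_le (QF.continuous.norm) continuous_norm
    have hsub : (S : Set D) ⊆ {y : D | ‖QF y‖ ≤ ‖y‖} := by
      intro y hy
      obtain ⟨s, a, ha, rfl⟩ := hrep y hy
      have hPy : ∀ i, P i (∑ j ∈ s, emb j (a j)) = a i := fun i => hP i s a ha
      have h1 : QF (∑ j ∈ s, emb j (a j)) = ∑ i ∈ F, emb i (a i) := by
        rw [hQapp]
        exact Finset.sum_congr rfl fun i _ => by rw [hPy i]
      simp only [Set.mem_setOf_eq, h1]
      have h2 : ‖∑ i ∈ F, emb i (a i)‖ ^ p ≤ ‖∑ j ∈ s, emb j (a j)‖ ^ p := by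
        rw [hemb_norm F a, hemb_norm s a]
        have h3 : ∑ i ∈ F, ‖a i‖ ^ p = ∑ i ∈ F ∩ s, ‖a i‖ ^ p := by
          refine (Finset.sum_subset Finset.inter_subset_left ?_).symm
          intro i hi his
          have hz : a i = 0 := ha i (fun h => his (Finset.mem_inter.mpr ⟨hi, h⟩))
          rw [hz, norm_zero, Real.zero_rpow (ne_of_gt hp0)]
        rw [h3]
        exact Finset.sum_le_sum_of_subset_of_nonneg Finset.inter_subset_right
          (fun i _ _ => Real.rpow_nonneg (norm_nonneg _) p)
      exact (Real.rpow_le_rpow_iff (norm_nonneg _) (norm_nonneg _) hp0).mp h2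
    intro y
    exact (hclosed.closure_subset_iff.mpr hsub) (hemb_dense y)
  -- convergence of partial-sum projections
  have hQtend : ∀ a : D, Tendsto (fun F : Finset I => ∑ i ∈ F, emb i (P i a))
      atTop (𝓝 a) := by
    intro a
    rw [Metric.tendsto_atTop]
    intro ε hε
    obtain ⟨x, hxS, hxd⟩ : ∃ x ∈ (S : Set D), dist a x < ε/2 :=
      Metric.mem_closure_iff.mp (hemb_dense a) (ε/2) (by positivity)
    obtain ⟨s, b, hb, rfl⟩ := hrep x hxS
    refine ⟨s, fun F hF => ?_⟩
    set x : D := ∑ j ∈ s, emb j (b j) with hxdef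
    have hPx : ∀ i, P i x = b i := fun i => hP i s b hb
    have hxF : ∑ i ∈ F, emb i (P i x) = x := by
      have h1 : ∑ i ∈ F, emb i (P i x) = ∑ i ∈ F, emb i (b i) :=
        Finset.sum_congr rfl fun i _ => by rw [hPx i]
      rw [h1, hxdef]
      exact (Finset.sum_subset hF (fun j _ hj => by rw [hb j hj, map_zero])).symm
    have key : (∑ i ∈ F, emb i (P i a)) - a
        = (∑ i ∈ F, emb i (P i (a - x))) + (x - a) := by
      have h1 : ∀ i, P i (a - x) = P i a - P i x := fun i => map_sub _ _ _
      have h2 : ∑ i ∈ F, emb i (P i (a - x))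
          = (∑ i ∈ F, emb i (P i a)) - ∑ i ∈ F, emb i (P i x) := by
        rw [← Finset.sum_sub_distrib]
        exact Finset.sum_congr rfl fun i _ => by rw [h1 i, map_sub]
      rw [h2, hxF]; abel
    rw [dist_eq_norm, key]
    calc ‖(∑ i ∈ F, emb i (P i (a - x))) + (x - a)‖
        ≤ ‖∑ i ∈ F, emb i (P i (a - x))‖ + ‖x - a‖ := norm_add_le _ _
      _ ≤ ‖a - x‖ + ‖x - a‖ := by
          have := hQle F (a - x)
          have h4 : ‖x - a‖ = ‖a - x‖ := norm_sub_rev _ _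
          linarith
      _ < ε := by
          rw [norm_sub_rev x a]
          have h5 : ‖a - x‖ = dist a x := (dist_eq_norm a x).symm
          rw [h5]; linarith
  -- comparison maps between tensor squares
  have hTex : ∀ i, ∃ T : (tsA i).X →L[ℂ] tsD.X,
      ∀ b c : A i, T ((tsA i).tmul b c) = tsD.tmul (emb i b) (emb i c) := by
    intro i
    set bil : A i →L[ℂ] A i →L[ℂ] tsD.X :=
      ((ContinuousLinearMap.compL ℂ (A i) D tsD.X).flip (emb i)).comp
        (tsD.tmul.comp (emb i)) with hbil
    obtain ⟨L, -, hL⟩ := (tsA i).lift tsD.X bil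
    refine ⟨L, fun b c => ?_⟩
    rw [hL b c, hbil]
    simp only [ContinuousLinearMap.comp_apply, ContinuousLinearMap.flip_apply,
      ContinuousLinearMap.compL_apply]
  choose T hT using hTex
  have hTr : ∀ i (d : D),
      (tsD.rsmul d).comp (T i) = (T i).comp ((tsA i).rsmul (P i d)) := by
    intro i d
    refine ContinuousLinearMap.ext_on (tsA i).dense_span ?_
    rintro x ⟨⟨b, c⟩, rfl⟩
    simp only [ContinuousLinearMap.comp_apply, hT i b c]
    rw [tsD.rsmul_tmul, (tsA i).rsmul_tmul, hT, hmul_r]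
  have hTl : ∀ i (d : D),
      (tsD.lsmul d).comp (T i) = (T i).comp ((tsA i).lsmul (P i d)) := by
    intro i d
    refine ContinuousLinearMap.ext_on (tsA i).dense_span ?_
    rintro x ⟨⟨b, c⟩, rfl⟩
    simp only [ContinuousLinearMap.comp_apply, hT i b c]
    rw [tsD.lsmul_tmul, (tsA i).lsmul_tmul, hT, hmul_l]
  have hTm : ∀ i, tsD.mulMap.comp (T i) = (emb i).comp ((tsA i).mulMap) := by
    intro i
    refine ContinuousLinearMap.ext_on (tsA i).dense_span ?_
    rintro x ⟨⟨b, c⟩, rfl⟩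
    simp only [ContinuousLinearMap.comp_apply, hT i b c, tsD.mulMap_tmul,
      (tsA i).mulMap_tmul, hemb_mul]
  -- unpack the approximate biflatness of each summand
  choose ι ne sl θ hθ using hbiflat
  letI : ∀ i, Nonempty (ι i) := ne
  letI : ∀ i, SemilatticeSup (ι i) := sl
  have hθ1 : ∀ i δ, (tsA i).IsBimoduleMorphism (θ i δ) := fun i => (hθ i).1
  have hθ2 : ∀ i (a : A i) (φ : A i →L[ℂ] ℂ),
      Tendsto (fun δ => θ i δ ((tsA i).piStar φ) a) atTop (𝓝 (φ a)) :=
    fun i => (hθ i).2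
  -- dualized maps
  set Ei : ∀ i, (A i →L[ℂ] ℂ) →L[ℂ] (D →L[ℂ] ℂ) :=
    fun i => (ContinuousLinearMap.compL ℂ D (A i) ℂ).flip (P i) with hEidef
  set Ri : ∀ i, (tsD.X →L[ℂ] ℂ) →L[ℂ] ((tsA i).X →L[ℂ] ℂ) :=
    fun i => (ContinuousLinearMap.compL ℂ (tsA i).X tsD.X ℂ).flip (T i) with hRidef
  have hEiapp : ∀ i (χ : A i →L[ℂ] ℂ) (d : D), Ei i χ d = χ (P i d) := by
    intro i χ d
    simp only [hEidef, ContinuousLinearMap.flip_apply, ContinuousLinearMap.compL_apply,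
      ContinuousLinearMap.comp_apply]
  have hRiapp : ∀ i (ψ : tsD.X →L[ℂ] ℂ) (m : (tsA i).X), Ri i ψ m = ψ (T i m) := by
    intro i ψ m
    simp only [hRidef, ContinuousLinearMap.flip_apply, ContinuousLinearMap.compL_apply,
      ContinuousLinearMap.comp_apply]
  refine ⟨(Finset I) × (Finset I → ∀ i, ι i),
    ⟨⟨∅, fun _ i => (ne i).some⟩⟩, inferInstance,
    fun d => ∑ i ∈ d.1, (Ei i).comp ((θ i ((d.2 d.1) i)).comp (Ri i)), ?_, ?_⟩
  · -- bimodule morphism property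
    rintro ⟨F, f⟩ a ψ
    constructor
    · ext d
      simp only [ContinuousLinearMap.sum_apply, ContinuousLinearMap.comp_apply, hEiapp,
        rmulOp, ContinuousLinearMap.flip_apply, ContinuousLinearMap.mul_apply']
      refine Finset.sum_congr rfl fun i _ => ?_
      have h1 : Ri i (ψ.comp (tsD.rsmul a)) = (Ri i ψ).comp ((tsA i).rsmul (P i a)) := by
        ext m
        simp only [hRiapp, ContinuousLinearMap.comp_apply]
        rw [show tsD.rsmul a (T i m) = T i ((tsA i).rsmul (P i a) m) from
          by simpa only [ContinuousLinearMap.comp_apply] using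
            ContinuousLinearMap.ext_iff.mp (hTr i a) m]
      rw [h1, (hθ1 i ((f F) i) (P i a) (Ri i ψ)).1, hPmul i d a]
      simp only [ContinuousLinearMap.comp_apply, rmulOp, ContinuousLinearMap.flip_apply,
        ContinuousLinearMap.mul_apply']
    · ext d
      simp only [ContinuousLinearMap.sum_apply, ContinuousLinearMap.comp_apply, hEiapp,
        lmulOp, ContinuousLinearMap.mul_apply']
      refine Finset.sum_congr rfl fun i _ => ?_
      have h1 : Ri i (ψ.comp (tsD.lsmul a)) = (Ri i ψ).comp ((tsA i).lsmul (P i a)) := by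
        ext m
        simp only [hRiapp, ContinuousLinearMap.comp_apply]
        rw [show tsD.lsmul a (T i m) = T i ((tsA i).lsmul (P i a) m) from
          by simpa only [ContinuousLinearMap.comp_apply] using
            ContinuousLinearMap.ext_iff.mp (hTl i a) m]
      rw [h1, (hθ1 i ((f F) i) (P i a) (Ri i ψ)).2, hPmul i a d]
      simp only [ContinuousLinearMap.comp_apply, lmulOp, ContinuousLinearMap.mul_apply']
  · -- convergence
    intro a φ
    have hRpi : ∀ i, Ri i (tsD.piStar φ) = (tsA i).piStar (φ.comp (emb i)) := by
      intro i
      ext m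
      simp only [hRiapp, TensorSquare.piStar, ContinuousLinearMap.comp_apply]
      rw [show tsD.mulMap (T i m) = emb i ((tsA i).mulMap m) from
        by simpa only [ContinuousLinearMap.comp_apply] using
          ContinuousLinearMap.ext_iff.mp (hTm i) m]
    have happ : ∀ d : (Finset I) × (Finset I → ∀ i, ι i),
        (∑ i ∈ d.1, (Ei i).comp ((θ i ((d.2 d.1) i)).comp (Ri i))) (tsD.piStar φ) a
        = ∑ i ∈ d.1, (θ i ((d.2 d.1) i)) ((tsA i).piStar (φ.comp (emb i))) (P i a) := by
      intro d
      simp only [ContinuousLinearMap.sum_apply, ContinuousLinearMap.comp_apply, hEiapp]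
      exact Finset.sum_congr rfl fun i _ => by rw [hRpi i]
    have hgoal : Tendsto (fun d : (Finset I) × (Finset I → ∀ i, ι i) =>
        ∑ i ∈ d.1, (θ i ((d.2 d.1) i)) ((tsA i).piStar (φ.comp (emb i))) (P i a))
        atTop (𝓝 (φ a)) := by
      rw [Metric.tendsto_atTop]
      intro ε hε
      have hsum : Tendsto (fun F : Finset I => ∑ i ∈ F, φ (emb i (P i a)))
          atTop (𝓝 (φ a)) := by
        have h1 := (φ.continuous.tendsto a).comp (hQtend a)
        refine h1.congr fun F => ?_
        simp only [Function.comp_apply, map_sum]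
      rw [Metric.tendsto_atTop] at hsum
      obtain ⟨F₀, hF₀⟩ := hsum (ε/2) (by positivity)
      have hchoice : ∀ (F : Finset I) (i : I), ∃ N : ι i, ∀ δ ≥ N,
          dist ((θ i δ) ((tsA i).piStar (φ.comp (emb i))) (P i a))
            (φ (emb i (P i a))) < ε/(2*((F.card : ℝ)+1)) := by
        intro F i
        have ht := hθ2 i (P i a) (φ.comp (emb i))
        rw [Metric.tendsto_atTop] at ht
        have hpos : (0:ℝ) < ε/(2*((F.card : ℝ)+1)) := by positivity
        obtain ⟨N, hN⟩ := ht _ hpos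
        exact ⟨N, fun δ hδ => by simpa only [ContinuousLinearMap.comp_apply] using hN δ hδ⟩
      choose g hg using hchoice
      refine ⟨⟨F₀, fun F => g F⟩, ?_⟩
      rintro ⟨F, f⟩ hle
      obtain ⟨hle1, hle2⟩ := hle
      have hterm : ∀ i ∈ F,
          dist ((θ i ((f F) i)) ((tsA i).piStar (φ.comp (emb i))) (P i a))
            (φ (emb i (P i a))) < ε/(2*((F.card : ℝ)+1)) := by
        intro i _
        exact hg F i ((f F) i) (hle2 F i)
      have h1 : dist (∑ i ∈ F, (θ i ((f F) i)) ((tsA i).piStar (φ.comp (emb i))) (P i a))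
          (∑ i ∈ F, φ (emb i (P i a))) ≤ ∑ _i ∈ F, ε/(2*((F.card : ℝ)+1)) :=
        dist_sum_sum_le_of_le F (fun i hi => (hterm i hi).le)
      have h2 : ∑ _i ∈ F, ε/(2*((F.card : ℝ)+1)) ≤ ε/2 := by
        rw [Finset.sum_const, nsmul_eq_mul]
        have hc1 : ((F.card : ℝ)) ≤ (F.card : ℝ) + 1 := by linarith
        have hn : ((F.card : ℝ) + 1) ≠ 0 := by positivity
        have heq : ((F.card : ℝ) + 1) * (ε/(2*((F.card : ℝ)+1))) = ε/2 := by
          rw [mul_comm 2 ((F.card : ℝ)+1), ← mul_div_assoc, mul_div_mul_left ε 2 hn]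
        calc (F.card : ℝ) * (ε/(2*((F.card : ℝ)+1)))
            ≤ ((F.card : ℝ) + 1) * (ε/(2*((F.card : ℝ)+1))) :=
              mul_le_mul_of_nonneg_right hc1 (by positivity)
          _ = ε/2 := heq
      have h3 := hF₀ F hle1
      calc dist (∑ i ∈ F, (θ i ((f F) i)) ((tsA i).piStar (φ.comp (emb i))) (P i a)) (φ a)
          ≤ dist (∑ i ∈ F, (θ i ((f F) i)) ((tsA i).piStar (φ.comp (emb i))) (P i a))
              (∑ i ∈ F, φ (emb i (P i a)))
            + dist (∑ i ∈ F, φ (emb i (P i a))) (φ a) := dist_triangle _ _ _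
        _ < ε := by linarith [h1.trans h2]
    exact hgoal.congr (fun d => (happ d).symm)
end
end
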